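/- arXiv:1712.03629 — 4 statements merged into one kernel-verified Lean document; each statement's English description precedes it below -/
import Mathlib

section
/- Let B be a central division algebra over a local field K with ring of integers O_B and uniformizer π_B, and let Δ = M₂(O_B). If a unit λ ∈ GL₂(B) (integral with unit reduced norm up to integral unit scalars, as in the definition of units) normalizes Δ, i.e. λΔλ^{-1} = Δ, then λ ∈ Δ^×. -/
/-- A nonarchimedean absolute value of a finite sum is bounded by any common
bound (≥ 0) on the terms. -/
lemma nonarch_sum_le {B : Type*} [DivisionRing B] (ρ : AbsoluteValue B ℝ)
    (hna : IsNonarchimedean ρ) {ι : Type*} (s : Finset ι) (f : ι → B) (C : ℝ)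
    (hC : 0 ≤ C) (h : ∀ i ∈ s, ρ (f i) ≤ C) : ρ (∑ i ∈ s, f i) ≤ C := by
  classical
  induction s using Finset.cons_induction with
  | empty => simpa using hC
  | cons a s ha ih =>
      rw [Finset.sum_cons]
      refine le_trans (hna _ _) (max_le (h a (Finset.mem_cons_self a s)) ?_)
      exact ih fun i hi => h i (Finset.mem_cons_of_mem hi)

/-- Lemma 3.2, for the standard maximal order: let B be a central
division algebra over a local field K with absolute value ρ extending that of K,
and let Δ = M₂(O_B) be the standard maximal order (matrices all of whose entries
have ρ ≤ 1).  If a unit λ of M₂(B) — an invertible element (with two-sided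
inverse μ) satisfying a monic polynomial over O_K with unit constant term —
normalizes Δ, i.e. λΔλ⁻¹ = Δ, then λ and λ⁻¹ both lie in Δ (so λ ∈ Δ^×). -/
theorem normalizing_unit_in_maximal_order
    (K : Type*) [Field K] (ρK : AbsoluteValue K ℝ) (hnaK : IsNonarchimedean ρK)
    (B : Type*) [DivisionRing B] [Algebra K B]
    (ρ : AbsoluteValue B ℝ) (hna : IsNonarchimedean ρ)
    (hext : ∀ a : K, ρ (algebraMap K B a) = ρK a)
    (lam mu : Matrix (Fin 2) (Fin 2) B)
    (hinv₁ : lam * mu = 1) (hinv₂ : mu * lam = 1)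
    -- λ is a unit: it satisfies a monic integral equation with unit constant term
    (p : Polynomial K) (hmonic : p.Monic) (hdeg : 0 < p.natDegree)
    (hint : ∀ i, ρK (p.coeff i) ≤ 1) (hconst : ρK (p.coeff 0) = 1)
    (heval : Polynomial.aeval lam p = 0)
    -- λ normalizes Δ = M₂(O_B)
    (hnorm : ∀ x : Matrix (Fin 2) (Fin 2) B,
      (∀ i j, ρ (x i j) ≤ 1) ↔ (∀ i j, ρ ((lam * x * mu) i j) ≤ 1)) :
    (∀ i j, ρ (lam i j) ≤ 1) ∧ (∀ i j, ρ (mu i j) ≤ 1) := by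
  classical
  set n := p.natDegree with hn
  -- the sup-norm on matrices
  set N : Matrix (Fin 2) (Fin 2) B → ℝ :=
    fun x => Finset.univ.sup' Finset.univ_nonempty
      (fun q : Fin 2 × Fin 2 => ρ (x q.1 q.2)) with hNdef
  have hNle : ∀ (x : Matrix (Fin 2) (Fin 2) B) (i j : Fin 2), ρ (x i j) ≤ N x := by
    intro x i j
    exact Finset.le_sup' (fun q : Fin 2 × Fin 2 => ρ (x q.1 q.2)) (Finset.mem_univ (i, j))
  have hN0 : ∀ x, 0 ≤ N x := fun x => le_trans (ρ.nonneg _) (hNle x 0 0)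
  have hNsup : ∀ x, ∃ i j, N x = ρ (x i j) := by
    intro x
    obtain ⟨q, _, hq⟩ := Finset.exists_mem_eq_sup' Finset.univ_nonempty
      (fun q : Fin 2 × Fin 2 => ρ (x q.1 q.2))
    exact ⟨q.1, q.2, hq⟩
  have hNle' : ∀ (x : Matrix (Fin 2) (Fin 2) B) (C : ℝ),
      (∀ i j, ρ (x i j) ≤ C) → N x ≤ C := by
    intro x C h
    exact Finset.sup'_le _ _ fun q _ => h q.1 q.2
  -- entrywise bound for products
  have hmul_entry : ∀ (x y : Matrix (Fin 2) (Fin 2) B) (i j : Fin 2),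
      ρ ((x * y) i j) ≤ N x * N y := by
    intro x y i j
    rw [Matrix.mul_apply]
    refine nonarch_sum_le ρ hna _ _ _ (mul_nonneg (hN0 x) (hN0 y)) ?_
    intro k _
    rw [map_mul]
    exact mul_le_mul (hNle x i k) (hNle y k j) (ρ.nonneg _) (hN0 x)
  have hNmul : ∀ x y, N (x * y) ≤ N x * N y := by
    intro x y
    obtain ⟨i, j, hij⟩ := hNsup (x * y)
    rw [hij]; exact hmul_entry x y i j
  set c := N lam with hc
  set d := N mu with hd
  -- c * d ≤ 1 using the normalizing property on a matrix unit
  have hcd_le : c * d ≤ 1 := by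
    obtain ⟨i, j, hij⟩ := hNsup lam
    obtain ⟨k, l, hkl⟩ := hNsup mu
    set E : Matrix (Fin 2) (Fin 2) B := Matrix.single j k 1 with hE
    have hEmem : ∀ r s, ρ (E r s) ≤ 1 := by
      intro r s
      rw [hE, Matrix.single]
      dsimp only [Matrix.of_apply]
      split_ifs
      · rw [map_one]
      · rw [map_zero]; norm_num
    have hval : (lam * E * mu) i l = lam i j * mu k l := by
      rw [Matrix.mul_apply, Finset.sum_eq_single k]
      · rw [hE, Matrix.mul_single_apply_same, mul_one]
      · intro q _ hq
        rw [hE, Matrix.mul_single_apply_of_ne _ _ _ _ _ hq, zero_mul]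
      · intro h; exact absurd (Finset.mem_univ k) h
    have hmain := (hnorm E).mp hEmem i l
    rw [hval, map_mul] at hmain
    rw [hc, hd, hij, hkl]
    exact hmain
  -- 1 ≤ c * d
  have hone_entry : ∀ (x y : Matrix (Fin 2) (Fin 2) B), x * y = 1 →
      (1:ℝ) ≤ N x * N y := by
    intro x y hxy
    have h1 : ((x * y) 0 0) = 1 := by rw [hxy]; simp [Matrix.one_apply]
    have h2 := hmul_entry x y 0 0
    rw [h1, map_one] at h2
    exact h2
  have hcd_ge : (1:ℝ) ≤ c * d := hone_entry lam mu hinv₁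
  have hcd : c * d = 1 := le_antisymm hcd_le hcd_ge
  have hc0 : 0 < c := by nlinarith [hN0 lam, hN0 mu]
  have hd0 : 0 < d := by nlinarith [hN0 lam, hN0 mu]
  -- powers
  have hN1 : N (1 : Matrix (Fin 2) (Fin 2) B) = 1 := by
    refine le_antisymm (hNle' _ _ ?_) ?_
    · intro i j
      rw [Matrix.one_apply]
      split_ifs
      · rw [map_one]
      · rw [map_zero]; norm_num
    · have h2 := hNle (1 : Matrix (Fin 2) (Fin 2) B) 0 0
      simpa [Matrix.one_apply] using h2
  have hNpow : ∀ (x : Matrix (Fin 2) (Fin 2) B) (k : ℕ), N (x ^ k) ≤ (N x) ^ k := by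
    intro x k
    induction k with
    | zero => simp [hN1]
    | succ m ih =>
        rw [pow_succ, pow_succ]
        exact le_trans (hNmul _ _) (mul_le_mul_of_nonneg_right ih (hN0 x))
  have hlmpow : ∀ k : ℕ, lam ^ k * mu ^ k = 1 := by
    intro k
    induction k with
    | zero => simp
    | succ m ih =>
        have step : lam ^ (m+1) * mu ^ (m+1) = lam ^ m * (lam * mu) * mu ^ m := by
          rw [pow_succ, pow_succ']; noncomm_ring
        rw [step, hinv₁, mul_one, ih]
  have hmlpow : ∀ k : ℕ, mu ^ k * lam ^ k = 1 := by
    intro k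
    induction k with
    | zero => simp
    | succ m ih =>
        have step : mu ^ (m+1) * lam ^ (m+1) = mu ^ m * (mu * lam) * lam ^ m := by
          rw [pow_succ, pow_succ']; noncomm_ring
        rw [step, hinv₂, mul_one, ih]
  -- lower bounds on norms of powers
  have hNpow_ge_lam : ∀ k : ℕ, c ^ k ≤ N (lam ^ k) := by
    intro k
    have h2 : (1:ℝ) ≤ N (lam ^ k) * d ^ k := by
      calc (1:ℝ) ≤ N (lam ^ k) * N (mu ^ k) := hone_entry _ _ (hlmpow k)
        _ ≤ N (lam ^ k) * d ^ k :=
          mul_le_mul_of_nonneg_left (hNpow mu k) (hN0 _)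
    have h3 := mul_le_mul_of_nonneg_left h2 (pow_nonneg hc0.le k)
    calc c ^ k = c ^ k * 1 := (mul_one _).symm
      _ ≤ c ^ k * (N (lam ^ k) * d ^ k) := h3
      _ = N (lam ^ k) * (c * d) ^ k := by rw [mul_pow]; ring
      _ = N (lam ^ k) := by rw [hcd, one_pow, mul_one]
  have hNpow_ge_mu : ∀ k : ℕ, d ^ k ≤ N (mu ^ k) := by
    intro k
    have h2 : (1:ℝ) ≤ N (mu ^ k) * c ^ k := by
      calc (1:ℝ) ≤ N (mu ^ k) * N (lam ^ k) := hone_entry _ _ (hmlpow k)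
        _ ≤ N (mu ^ k) * c ^ k :=
          mul_le_mul_of_nonneg_left (hNpow lam k) (hN0 _)
    have h3 := mul_le_mul_of_nonneg_left h2 (pow_nonneg hd0.le k)
    calc d ^ k = d ^ k * 1 := (mul_one _).symm
      _ ≤ d ^ k * (N (mu ^ k) * c ^ k) := h3
      _ = N (mu ^ k) * (c * d) ^ k := by rw [mul_pow]; ring_nf
      _ = N (mu ^ k) := by rw [hcd, one_pow, mul_one]
  -- the polynomial relation
  have hsum : ∑ i ∈ Finset.range (n + 1), p.coeff i • lam ^ i = 0 := by
    have h0 := heval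
    rw [Polynomial.aeval_eq_sum_range, ← hn] at h0
    exact h0
  -- smul entries
  have hsmul_entry : ∀ (a : K) (x : Matrix (Fin 2) (Fin 2) B) (i j : Fin 2),
      ρ ((a • x) i j) = ρK a * ρ (x i j) := by
    intro a x i j
    rw [Matrix.smul_apply, Algebra.smul_def, map_mul, hext]
  -- c ≤ 1
  have hc1 : c ≤ 1 := by
    by_contra hcontra
    push_neg at hcontra
    have hlam_n : lam ^ n = -∑ i ∈ Finset.range n, p.coeff i • lam ^ i := by
      rw [Finset.sum_range_succ] at hsum
      have hcn : p.coeff n = 1 := hmonic.coeff_natDegree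
      rw [hcn, one_smul] at hsum
      exact eq_neg_of_add_eq_zero_right hsum
    obtain ⟨i, j, hij⟩ := hNsup (lam ^ n)
    have hbound : ρ ((lam ^ n) i j) ≤ c ^ (n - 1) := by
      rw [hlam_n, Matrix.neg_apply, ρ.map_neg, Matrix.sum_apply]
      refine nonarch_sum_le ρ hna _ _ _ (pow_nonneg hc0.le _) ?_
      intro k hk
      rw [hsmul_entry]
      calc ρK (p.coeff k) * ρ ((lam ^ k) i j) ≤ 1 * N (lam ^ k) :=
            mul_le_mul (hint k) (hNle _ i j) (ρ.nonneg _) zero_le_one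
        _ = N (lam ^ k) := one_mul _
        _ ≤ c ^ k := hNpow lam k
        _ ≤ c ^ (n - 1) := pow_le_pow_right₀ hcontra.le
            (Nat.le_sub_one_of_lt (Finset.mem_range.mp hk))
    have hge : c ^ n ≤ ρ ((lam ^ n) i j) := by rw [← hij]; exact hNpow_ge_lam n
    have hlt : c ^ (n - 1) < c ^ n := pow_lt_pow_right₀ hcontra (by omega)
    linarith
  -- d ≤ 1
  have hd1 : d ≤ 1 := by
    by_contra hcontra
    push_neg at hcontra
    have hmupow : ∀ k, k ≤ n → mu ^ n * lam ^ k = mu ^ (n - k) := by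
      intro k hk
      have h4 : mu ^ n = mu ^ (n - k) * mu ^ k := by rw [← pow_add]; congr 1; omega
      rw [h4, mul_assoc, hmlpow k, mul_one]
    have hsum2 : ∑ k ∈ Finset.range (n + 1), p.coeff k • mu ^ (n - k) = 0 := by
      have h0 : mu ^ n * (∑ i ∈ Finset.range (n + 1), p.coeff i • lam ^ i) = 0 := by
        rw [hsum, mul_zero]
      rw [Finset.mul_sum] at h0
      rw [← h0]
      refine Finset.sum_congr rfl ?_
      intro k hk
      rw [mul_smul_comm, hmupow k (Nat.lt_succ_iff.mp (Finset.mem_range.mp hk))]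
    rw [Finset.sum_range_succ'] at hsum2
    simp only [Nat.sub_zero] at hsum2
    have hmu_n : p.coeff 0 • mu ^ n
        = -∑ i ∈ Finset.range n, p.coeff (i + 1) • mu ^ (n - (i + 1)) :=
      eq_neg_of_add_eq_zero_right hsum2
    obtain ⟨i, j, hij⟩ := hNsup (mu ^ n)
    have hbound : ρ ((p.coeff 0 • mu ^ n) i j) ≤ d ^ (n - 1) := by
      rw [hmu_n, Matrix.neg_apply, ρ.map_neg, Matrix.sum_apply]
      refine nonarch_sum_le ρ hna _ _ _ (pow_nonneg hd0.le _) ?_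
      intro k hk
      rw [hsmul_entry]
      calc ρK (p.coeff (k + 1)) * ρ ((mu ^ (n - (k + 1))) i j)
            ≤ 1 * N (mu ^ (n - (k + 1))) :=
            mul_le_mul (hint _) (hNle _ i j) (ρ.nonneg _) zero_le_one
        _ = N (mu ^ (n - (k + 1))) := one_mul _
        _ ≤ d ^ (n - (k + 1)) := hNpow mu _
        _ ≤ d ^ (n - 1) := pow_le_pow_right₀ hcontra.le (by omega)
    have heq : ρ ((p.coeff 0 • mu ^ n) i j) = ρ ((mu ^ n) i j) := by
      rw [hsmul_entry, hconst, one_mul]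
    have hge : d ^ n ≤ ρ ((mu ^ n) i j) := by rw [← hij]; exact hNpow_ge_mu n
    have hlt : d ^ (n - 1) < d ^ n := pow_lt_pow_right₀ hcontra (by omega)
    rw [heq] at hbound
    linarith
  exact ⟨fun i j => le_trans (hNle lam i j) hc1, fun i j => le_trans (hNle mu i j) hd1⟩
end

section
/- Let B be a central division algebra over a local field with ring of integers O_B, uniformizer π_B generating the maximal two-sided ideal M_Δ of Δ = M₂(O_B). For t ≥ 1, define Δ^{[t]} = {x ∈ Δ : the image of x in Δ/M_Δ^t lies in the center of Δ/M_Δ^t}. Then an element h ∈ M₂(B) lies in every maximal order at distance at most t from Δ in the Bruhat–Tits tree if and only if h ∈ Δ^{[t]}. Concretely: h belongs to every conjugate uΔu^{-1} with u ∈ GL₂(B) such that the corresponding lattice classes are at distance ≤ t from O_B² if and only if h ≡ c·Id mod π_B^t M₂(O_B) for some c in the center of O_B/π_B^t O_B. -/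
noncomputable section

variable {B : Type*} [DivisionRing B]

/-- The standard O_B-lattice O_B² transformed by u: the right O_B-lattice u·O_B². -/
def latticeOf (ρ : AbsoluteValue B ℝ) (u : Matrix (Fin 2) (Fin 2) B) :
    Set (Fin 2 → B) :=
  {w | ∃ v : Fin 2 → B, (∀ i, ρ (v i) ≤ 1) ∧ w = u.mulVec v}

/-- The lattice class of u·O_B² lies at distance ≤ t from the class of O_B²:
some right-scalar multiple (homothety) of u·O_B² is sandwiched between
O_B²·π_B^t and O_B². -/
def latticeDistLE (ρ : AbsoluteValue B ℝ) (πB : B) (t : ℕ)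
    (u : Matrix (Fin 2) (Fin 2) B) : Prop :=
  ∃ b : B, b ≠ 0 ∧
    (∀ w ∈ latticeOf ρ u, ∀ i, ρ (w i * b) ≤ 1) ∧
    (∀ v : Fin 2 → B, (∀ i, ρ (v i) ≤ 1) →
      ∃ w ∈ latticeOf ρ u, (fun i => v i * πB ^ t) = fun i => w i * b)

/-- Membership in the conjugate maximal order u·M₂(O_B)·u⁻¹. -/
def memConjOrder (ρ : AbsoluteValue B ℝ) (u uinv : Matrix (Fin 2) (Fin 2) B)
    (h : Matrix (Fin 2) (Fin 2) B) : Prop :=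
  ∃ m : Matrix (Fin 2) (Fin 2) B, (∀ i j, ρ (m i j) ≤ 1) ∧ h = u * m * uinv

/-! ### Auxiliary lemmas -/

lemma na_sub' {ρ : AbsoluteValue B ℝ} (hna : IsNonarchimedean ρ) (a b : B) :
    ρ (a - b) ≤ max (ρ a) (ρ b) := by
  have := hna a (-b); simpa [sub_eq_add_neg] using this

lemma lattice_add' {ρ : AbsoluteValue B ℝ} (hna : IsNonarchimedean ρ)
    {u : Matrix (Fin 2) (Fin 2) B} {w w' : Fin 2 → B}
    (hw : w ∈ latticeOf ρ u) (hw' : w' ∈ latticeOf ρ u) :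
    (fun i => w i + w' i) ∈ latticeOf ρ u := by
  obtain ⟨v, hv, rfl⟩ := hw
  obtain ⟨v', hv', rfl⟩ := hw'
  refine ⟨fun j => v j + v' j, fun i => le_trans (hna _ _) (max_le (hv i) (hv' i)), ?_⟩
  funext i
  simp [Matrix.mulVec, dotProduct, Fin.sum_univ_two, mul_add]
  abel

lemma lattice_smul' {ρ : AbsoluteValue B ℝ}
    {u : Matrix (Fin 2) (Fin 2) B} {w : Fin 2 → B}
    (hw : w ∈ latticeOf ρ u) {s : B} (hs : ρ s ≤ 1) :
    (fun i => w i * s) ∈ latticeOf ρ u := by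
  obtain ⟨v, hv, rfl⟩ := hw
  refine ⟨fun j => v j * s, fun i => by
    calc ρ (v i * s) = ρ (v i) * ρ s := map_mul ρ _ _
    _ ≤ 1 * 1 := mul_le_mul (hv i) hs (ρ.nonneg s) zero_le_one
    _ = 1 := one_mul 1, ?_⟩
  funext i
  simp [Matrix.mulVec, dotProduct, Fin.sum_univ_two, add_mul, mul_assoc]

lemma mem_of_small' {ρ : AbsoluteValue B ℝ} {πB : B} (hπ : 0 < ρ πB) {t : ℕ}
    {u : Matrix (Fin 2) (Fin 2) B} {b : B}
    (hb2 : ∀ v : Fin 2 → B, (∀ i, ρ (v i) ≤ 1) →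
      ∃ w ∈ latticeOf ρ u, (fun i => v i * πB ^ t) = fun i => w i * b)
    (d : Fin 2 → B) (hd : ∀ i, ρ (d i) ≤ ρ πB ^ t) :
    ∃ w ∈ latticeOf ρ u, ∀ i, d i = w i * b := by
  have hπt0 : πB ^ t ≠ 0 := pow_ne_zero t (ρ.ne_zero_iff.mp hπ.ne')
  have hρπt : (0:ℝ) < ρ πB ^ t := pow_pos hπ t
  obtain ⟨w, hwΛ, hweq⟩ := hb2 (fun i => d i * (πB ^ t)⁻¹) (fun i => by
    rw [map_mul, map_inv₀, map_pow, mul_inv_le_iff₀ hρπt, one_mul]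
    exact hd i)
  refine ⟨w, hwΛ, fun i => ?_⟩
  have := congrFun hweq i
  simpa [mul_assoc, inv_mul_cancel₀ hπt0] using this

/-- Core of the backward direction: an element congruent to a nearly-central
scalar mod π^t maps every sandwiched lattice into itself. -/
lemma endo_lemma' {ρ : AbsoluteValue B ℝ} (hna : IsNonarchimedean ρ) {πB : B}
    (hπ : 0 < ρ πB) {t : ℕ} {c : B} (hc1 : ρ c ≤ 1)
    (hcc : ∀ x : B, ρ x ≤ 1 → ρ (c * x - x * c) ≤ ρ πB ^ t)
    {h : Matrix (Fin 2) (Fin 2) B}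
    (hce : ∀ i j, ρ (h i j - (if i = j then c else 0)) ≤ ρ πB ^ t)
    {u : Matrix (Fin 2) (Fin 2) B} {b : B} (hb0 : b ≠ 0)
    (hb1 : ∀ w ∈ latticeOf ρ u, ∀ i, ρ (w i * b) ≤ 1)
    (hb2 : ∀ v : Fin 2 → B, (∀ i, ρ (v i) ≤ 1) →
      ∃ w ∈ latticeOf ρ u, (fun i => v i * πB ^ t) = fun i => w i * b)
    {w : Fin 2 → B} (hw : w ∈ latticeOf ρ u) :
    h.mulVec w ∈ latticeOf ρ u := by
  have hx : ∀ i, ρ (w i * b) ≤ 1 := hb1 w hw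
  set s : B := b * c * b⁻¹ with hs_def
  have hρb : 0 < ρ b := ρ.pos hb0
  have hs : ρ s ≤ 1 := by
    rw [hs_def, map_mul, map_mul, map_inv₀]
    calc ρ b * ρ c * (ρ b)⁻¹ = ρ c * (ρ b * (ρ b)⁻¹) := by ring
    _ = ρ c := by rw [mul_inv_cancel₀ hρb.ne', mul_one]
    _ ≤ 1 := hc1
  have hws : (fun i => w i * s) ∈ latticeOf ρ u := lattice_smul' hw hs
  set r : Fin 2 → B := fun i =>
    (c * (w i * b) - (w i * b) * c) +
      ((h i 0 - (if i = 0 then c else 0)) * (w 0 * b) +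
       (h i 1 - (if i = 1 then c else 0)) * (w 1 * b)) with hr_def
  have hr : ∀ i, ρ (r i) ≤ ρ πB ^ t := by
    intro i
    have h1 : ρ (c * (w i * b) - (w i * b) * c) ≤ ρ πB ^ t := hcc _ (hx i)
    have h2 : ∀ j, ρ ((h i j - (if i = j then c else 0)) * (w j * b)) ≤ ρ πB ^ t := by
      intro j
      rw [map_mul]
      calc ρ (h i j - (if i = j then c else 0)) * ρ (w j * b)
          ≤ ρ πB ^ t * 1 := mul_le_mul (hce i j) (hx j) (ρ.nonneg _) (by positivity)
      _ = ρ πB ^ t := mul_one _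
    refine le_trans (hna _ _) (max_le h1 (le_trans (hna _ _) (max_le (h2 0) (h2 1))))
  obtain ⟨w'', hw''Λ, hw''⟩ := mem_of_small' hπ hb2 r hr
  have key : ∀ i, (h.mulVec w) i * b = (w i * s + w'' i) * b := by
    intro i
    have hbc : ∀ g : B, g * s * b = g * b * c := by
      intro g
      rw [hs_def, mul_assoc g, mul_assoc (b*c), inv_mul_cancel₀ hb0, mul_one,
        ← mul_assoc]
    rw [add_mul, ← hw'' i, hbc]
    fin_cases i <;>
      simp only [Matrix.mulVec, dotProduct, Fin.sum_univ_two, hr_def] <;>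
      simp <;> noncomm_ring
  have heq : h.mulVec w = fun i => w i * s + w'' i := by
    funext i
    exact mul_right_cancel₀ hb0 (key i)
  rw [heq]
  exact lattice_add' hna hws hw''Λ

lemma tri_mul_inv' {p q x : B} (hp0 : p ≠ 0) (hq0 : q ≠ 0) :
    !![p, 0; x, q] * !![p⁻¹, 0; -(q⁻¹ * (x * p⁻¹)), q⁻¹] = 1 := by
  ext i j
  fin_cases i <;> fin_cases j <;>
    simp [Matrix.mul_fin_two, Matrix.one_fin_two, mul_inv_cancel₀ hp0,
      mul_inv_cancel₀ hq0, mul_inv_cancel_left₀ hq0, mul_assoc]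

lemma tri_inv_mul' {p q x : B} (hp0 : p ≠ 0) (hq0 : q ≠ 0) :
    !![p⁻¹, 0; -(q⁻¹ * (x * p⁻¹)), q⁻¹] * !![p, 0; x, q] = 1 := by
  ext i j
  fin_cases i <;> fin_cases j <;>
    simp [Matrix.mul_fin_two, Matrix.one_fin_two, inv_mul_cancel₀ hp0,
      inv_mul_cancel₀ hq0, inv_mul_cancel_right₀ hp0, mul_assoc]

lemma real_div_le_one' {a z : ℝ} (ha : 0 < a) (h : z ≤ a) : a⁻¹ * z ≤ 1 := by
  calc a⁻¹ * z ≤ a⁻¹ * a := mul_le_mul_of_nonneg_left h (inv_nonneg.2 ha.le)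
  _ = 1 := inv_mul_cancel₀ ha.ne'

lemma real_div_le' {a z c : ℝ} (ha : 0 < a) (h : z ≤ a * c) : a⁻¹ * z ≤ c := by
  calc a⁻¹ * z ≤ a⁻¹ * (a * c) := mul_le_mul_of_nonneg_left h (inv_nonneg.2 ha.le)
  _ = c := by field_simp

lemma real_le_of_inv_mul_le_one {a z : ℝ} (ha : 0 < a) (h : a⁻¹ * z ≤ 1) : z ≤ a := by
  have := mul_le_mul_of_nonneg_left h ha.le
  rwa [mul_one, mul_inv_cancel_left₀ ha.ne'] at this

lemma tri_lattice' (ρ : AbsoluteValue B ℝ) (hna : IsNonarchimedean ρ)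
    {πB p q x : B} (hπ : 0 < ρ πB)
    (hp0 : p ≠ 0) (hq0 : q ≠ 0)
    (hp1 : ρ p ≤ 1) (hq1 : ρ q ≤ 1) (hx : ρ x ≤ 1) (t : ℕ)
    (hpt : ρ πB ^ t ≤ ρ p) (hpqt : ρ πB ^ t ≤ ρ p * ρ q) :
    latticeDistLE ρ πB t !![p, 0; x, q] := by
  have hρp : 0 < ρ p := ρ.pos hp0
  have hρq : 0 < ρ q := ρ.pos hq0
  have hπt : (0:ℝ) < ρ πB ^ t := pow_pos hπ t
  have hnasub : ∀ a b : B, ρ (a - b) ≤ max (ρ a) (ρ b) := fun a b => by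
    have := hna a (-b); simpa [sub_eq_add_neg] using this
  refine ⟨1, one_ne_zero, ?_, ?_⟩
  · rintro w ⟨v, hv, rfl⟩ i
    fin_cases i <;>
      simp [Matrix.mulVec, dotProduct, Fin.sum_univ_two]
    · calc ρ p * ρ (v 0) ≤ 1 * 1 := mul_le_mul hp1 (hv 0) (ρ.nonneg _) zero_le_one
      _ = 1 := one_mul 1
    · refine le_trans (hna _ _) (max_le ?_ ?_)
      · calc ρ (x * v 0) = ρ x * ρ (v 0) := map_mul ρ _ _
        _ ≤ 1 * 1 := mul_le_mul hx (hv 0) (ρ.nonneg _) zero_le_one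
        _ = 1 := one_mul 1
      · calc ρ (q * v 1) = ρ q * ρ (v 1) := map_mul ρ _ _
        _ ≤ 1 * 1 := mul_le_mul hq1 (hv 1) (ρ.nonneg _) zero_le_one
        _ = 1 := one_mul 1
  · intro v hv
    set a0 : B := p⁻¹ * (v 0 * πB ^ t) with ha0
    set a1 : B := q⁻¹ * (v 1 * πB ^ t - x * a0) with ha1
    have hva0 : ρ a0 ≤ 1 := by
      rw [ha0, map_mul, map_inv₀]
      refine real_div_le_one' hρp ?_
      rw [map_mul, map_pow]
      exact le_trans (mul_le_of_le_one_left hπt.le (hv 0)) hpt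
    have ha0small : ρ a0 ≤ (ρ p)⁻¹ * ρ πB ^ t := by
      rw [ha0, map_mul, map_inv₀]
      refine mul_le_mul_of_nonneg_left ?_ (inv_nonneg.2 hρp.le)
      rw [map_mul, map_pow]
      exact mul_le_of_le_one_left hπt.le (hv 0)
    have hva1 : ρ a1 ≤ 1 := by
      rw [ha1, map_mul, map_inv₀]
      refine real_div_le_one' hρq ?_
      refine le_trans (hnasub _ _) (max_le ?_ ?_)
      · rw [map_mul, map_pow]
        refine le_trans (mul_le_of_le_one_left hπt.le (hv 1)) ?_
        exact le_trans hpqt (mul_le_of_le_one_left hρq.le hp1)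
      · rw [map_mul]
        refine le_trans (mul_le_of_le_one_left (ρ.nonneg _) hx) ?_
        refine le_trans ha0small ?_
        refine real_div_le' hρp hpqt
    refine ⟨_, ⟨![a0, a1], ?_, rfl⟩, ?_⟩
    · intro i
      fin_cases i
      · simpa using hva0
      · simpa using hva1
    funext i
    fin_cases i <;>
      simp only [Matrix.mulVec, dotProduct, Fin.sum_univ_two, mul_one] <;>
      simp [ha0, ha1, mul_inv_cancel_left₀ hp0, mul_inv_cancel_left₀ hq0]

lemma conj_entries' {ρ : AbsoluteValue B ℝ} {u uinv h : Matrix (Fin 2) (Fin 2) B}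
    (h2 : uinv * u = 1) (hm : memConjOrder ρ u uinv h) :
    ∀ i j, ρ ((uinv * h * u) i j) ≤ 1 := by
  obtain ⟨m, hmI, rfl⟩ := hm
  have e : uinv * (u * m * uinv) * u = m := by
    simp only [mul_assoc]
    rw [h2, mul_one, ← mul_assoc, h2, one_mul]
  intro i j
  rw [e]
  exact hmI i j

/-- Lemma on Δ^{[t]}: let B be a central division algebra over a
local field with uniformizer π_B, Δ = M₂(O_B).  An element h of M₂(B) lies in
every maximal order at distance ≤ t from Δ in the Bruhat–Tits tree (i.e. in every
conjugate uΔu⁻¹ whose lattice class is at distance ≤ t from that of O_B²) if and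
only if h ∈ Δ^{[t]}, i.e. h ≡ c·Id mod π_B^t·M₂(O_B) for some c in O_B whose image
is central in O_B/π_B^t O_B. -/
theorem ball_intersection_eq_congruence_order
    (ρ : AbsoluteValue B ℝ) (hna : IsNonarchimedean ρ)
    (πB : B)
    (hπB : 0 < ρ πB ∧ ρ πB < 1 ∧ ∀ x : B, x ≠ 0 → ρ x < 1 → ρ x ≤ ρ πB)
    (hdisc : ∀ x : B, x ≠ 0 → ∃ k : ℤ, ρ x = ρ πB ^ k)
    (t : ℕ) (ht : 1 ≤ t)
    (h : Matrix (Fin 2) (Fin 2) B) :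
    (∀ u uinv : Matrix (Fin 2) (Fin 2) B, u * uinv = 1 → uinv * u = 1 →
      latticeDistLE ρ πB t u → memConjOrder ρ u uinv h) ↔
    (∃ c : B, ρ c ≤ 1 ∧
      (∀ x : B, ρ x ≤ 1 → ρ (c * x - x * c) ≤ ρ πB ^ t) ∧
      (∀ i j, ρ (h i j - (if i = j then c else 0)) ≤ ρ πB ^ t)) := by
  obtain ⟨hπ, hπlt, hπmax⟩ := hπB
  have hπ0 : πB ≠ 0 := ρ.ne_zero_iff.mp hπ.ne'
  have hπt0 : πB ^ t ≠ 0 := pow_ne_zero t hπ0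
  have hπt : (0:ℝ) < ρ πB ^ t := pow_pos hπ t
  have hπt1 : ρ πB ^ t ≤ 1 := pow_le_one₀ (ρ.nonneg _) hπlt.le
  have hρπt : ρ (πB ^ t) = ρ πB ^ t := map_pow ρ πB t
  constructor
  · -- forward direction
    intro H
    -- instance A : u = 1
    have hA : ∀ i j, ρ (h i j) ≤ 1 := by
      have hl : latticeDistLE ρ πB t !![(1:B), 0; 0, 1] :=
        tri_lattice' ρ hna hπ one_ne_zero one_ne_zero
          (by simp) (by simp) (by simp) t (by simpa using hπt1) (by simpa using hπt1)
      have hme := H !![(1:B), 0; 0, 1] !![(1:B)⁻¹, 0; -(1⁻¹ * ((0:B) * 1⁻¹)), 1⁻¹]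
        (tri_mul_inv' one_ne_zero one_ne_zero) (tri_inv_mul' one_ne_zero one_ne_zero) hl
      have := conj_entries' (tri_inv_mul' one_ne_zero one_ne_zero) hme
      intro i j
      have h2 := this i j
      have e1 : !![(1:B)⁻¹, 0; -(1⁻¹ * ((0:B) * 1⁻¹)), 1⁻¹] = (1 : Matrix (Fin 2) (Fin 2) B) := by
        rw [Matrix.one_fin_two]; norm_num
      have e2 : !![(1:B), 0; 0, 1] = (1 : Matrix (Fin 2) (Fin 2) B) := by
        rw [Matrix.one_fin_two]
      rwa [e1, e2, one_mul, mul_one] at h2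
    -- instance B : u = diag(π^t, 1), gives ρ (h 0 1) ≤ ρ πB ^ t
    have hB : ρ (h 0 1) ≤ ρ πB ^ t := by
      have hl : latticeDistLE ρ πB t !![πB ^ t, 0; 0, 1] :=
        tri_lattice' ρ hna hπ hπt0 one_ne_zero
          (by rw [hρπt]; exact hπt1) (by simp) (by simp) t
          (le_of_eq hρπt.symm) (by rw [map_one, mul_one]; exact le_of_eq hρπt.symm)
      have hme := H !![πB ^ t, 0; 0, 1] !![(πB ^ t)⁻¹, 0; -(1⁻¹ * ((0:B) * (πB ^ t)⁻¹)), 1⁻¹]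
        (tri_mul_inv' hπt0 one_ne_zero) (tri_inv_mul' hπt0 one_ne_zero) hl
      have h2 := conj_entries' (tri_inv_mul' hπt0 one_ne_zero) hme 0 1
      have e : (!![(πB ^ t)⁻¹, 0; -(1⁻¹ * ((0:B) * (πB ^ t)⁻¹)), 1⁻¹] * h * !![πB ^ t, 0; 0, 1]) 0 1
          = (πB ^ t)⁻¹ * h 0 1 := by
        rw [Matrix.eta_fin_two h, Matrix.mul_fin_two, Matrix.mul_fin_two]
        simp
      rw [e, map_mul, map_inv₀, hρπt] at h2
      exact real_le_of_inv_mul_le_one hπt h2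
    -- instance C : u = !![1,0;x,π^t] for ρ x ≤ 1
    have hC : ∀ x : B, ρ x ≤ 1 →
        ρ (h 1 0 - x * h 0 0 + h 1 1 * x - x * (h 0 1 * x)) ≤ ρ πB ^ t := by
      intro x hx
      have hl : latticeDistLE ρ πB t !![(1:B), 0; x, πB ^ t] :=
        tri_lattice' ρ hna hπ one_ne_zero hπt0
          (by simp) (by rw [hρπt]; exact hπt1) hx t
          (by simpa using hπt1) (by rw [map_one, one_mul]; exact le_of_eq hρπt.symm)
      have hme := H !![(1:B), 0; x, πB ^ t]
        !![(1:B)⁻¹, 0; -((πB ^ t)⁻¹ * (x * 1⁻¹)), (πB ^ t)⁻¹]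
        (tri_mul_inv' one_ne_zero hπt0) (tri_inv_mul' one_ne_zero hπt0) hl
      have h2 := conj_entries' (tri_inv_mul' one_ne_zero hπt0) hme 1 0
      have e : (!![(1:B)⁻¹, 0; -((πB ^ t)⁻¹ * (x * 1⁻¹)), (πB ^ t)⁻¹] * h *
          !![(1:B), 0; x, πB ^ t]) 1 0
          = (πB ^ t)⁻¹ * (h 1 0 - x * h 0 0 + h 1 1 * x - x * (h 0 1 * x)) := by
        rw [Matrix.eta_fin_two h, Matrix.mul_fin_two, Matrix.mul_fin_two]
        simp
        noncomm_ring
      rw [e, map_mul, map_inv₀, hρπt] at h2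
      exact real_le_of_inv_mul_le_one hπt h2
    -- now assemble
    have h10 : ρ (h 1 0) ≤ ρ πB ^ t := by
      have := hC 0 (by simp)
      simpa using this
    have hsub : ∀ x : B, ρ x ≤ 1 → ρ (h 1 1 * x - x * h 0 0) ≤ ρ πB ^ t := by
      intro x hx
      have hd := hC x hx
      have e : h 1 1 * x - x * h 0 0 =
          (h 1 0 - x * h 0 0 + h 1 1 * x - x * (h 0 1 * x)) + -(h 1 0) + x * (h 0 1 * x) := by
        noncomm_ring
      rw [e]
      refine le_trans (hna _ _) (max_le (le_trans (hna _ _) (max_le hd ?_)) ?_)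
      · rw [ρ.map_neg]; exact h10
      · rw [map_mul, map_mul]
        have e1 : ρ (h 0 1) * ρ x ≤ ρ πB ^ t := by
          calc ρ (h 0 1) * ρ x ≤ ρ πB ^ t * 1 := mul_le_mul hB hx (ρ.nonneg _) hπt.le
          _ = ρ πB ^ t := mul_one _
        calc ρ x * (ρ (h 0 1) * ρ x) ≤ 1 * ρ πB ^ t :=
          mul_le_mul hx e1 (by positivity) zero_le_one
        _ = ρ πB ^ t := one_mul _
    have hdiag : ρ (h 1 1 - h 0 0) ≤ ρ πB ^ t := by
      have := hsub 1 (by simp)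
      simpa using this
    refine ⟨h 0 0, hA 0 0, ?_, ?_⟩
    · intro x hx
      have e : h 0 0 * x - x * h 0 0 =
          -((h 1 1 - h 0 0) * x) + (h 1 1 * x - x * h 0 0) := by noncomm_ring
      rw [e]
      refine le_trans (hna _ _) (max_le ?_ (hsub x hx))
      rw [ρ.map_neg, map_mul]
      calc ρ (h 1 1 - h 0 0) * ρ x ≤ ρ πB ^ t * 1 :=
        mul_le_mul hdiag hx (ρ.nonneg _) hπt.le
      _ = ρ πB ^ t := mul_one _
    · intro i j
      fin_cases i <;> fin_cases j <;> simp
      · exact hB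
      · exact h10
      · exact hdiag
  · -- backward direction
    rintro ⟨c, hc1, hcc, hce⟩ u uinv huv hvu ⟨b, hb0, hb1, hb2⟩
    refine ⟨uinv * h * u, ?_, ?_⟩
    · intro i j
      -- column j of u lies in the lattice
      have hcol : (fun i => u i j) ∈ latticeOf ρ u := by
        refine ⟨Pi.single j 1, ?_, ?_⟩
        · intro i
          by_cases hij : i = j <;> simp [Pi.single_apply, hij]
        · funext i
          fin_cases j <;>
            simp [Matrix.mulVec, dotProduct, Fin.sum_univ_two, Pi.single_apply]
      obtain ⟨v', hv', heq⟩ := endo_lemma' hna hπ hc1 hcc hce hb0 hb1 hb2 hcol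
      have e1 : (uinv * h * u) i j = (uinv.mulVec (h.mulVec (fun k => u k j))) i := by
        simp only [Matrix.mul_apply, Matrix.mulVec, dotProduct, Fin.sum_univ_two]
        noncomm_ring
      rw [e1, heq, Matrix.mulVec_mulVec, hvu, Matrix.one_mulVec]
      exact hv' i
    · have e : u * (uinv * h * u) * uinv = (u * uinv) * h * (u * uinv) := by
        noncomm_ring
      rw [e, huv, one_mul, mul_one]

end
end

section
/- Let B be a central division algebra over a local field, Δ₀ = M₂(O_B), and let H ⊆ Δ₀ be an O_K-order. The neighbors of Δ₀ in the Bruhat–Tits tree that contain H are in bijection with the one-dimensional ℍ-submodules of 𝔹², where ℍ = (H + π_BΔ₀)/π_BΔ₀ ⊆ M₂(𝔹) and 𝔹 = O_B/π_B O_B is the residue (finite) field. Consequently the number of such neighbors is 0, 1, 2, or q^n + 1, where q^n = |𝔹|. -/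
noncomputable section
open Submodule Module

variable {B : Type*} [DivisionRing B]

/-- The right O_B-lattice Λ₀·π_B + v·O_B, for v ∈ O_B² (Λ₀ = O_B²). -/
def nbrLattice (ρ : AbsoluteValue B ℝ) (πB : B) (v : Fin 2 → B) :
    Set (Fin 2 → B) :=
  {w | ∃ (z : Fin 2 → B) (b : B), (∀ i, ρ (z i) ≤ 1) ∧ ρ b ≤ 1 ∧
    w = fun i => z i * πB + v i * b}

/-- The neighbor maximal order End_{O_B}(Λ₀π_B + v·O_B) of Δ₀ = M₂(O_B). -/
def nbrOrder (ρ : AbsoluteValue B ℝ) (πB : B) (v : Fin 2 → B) :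
    Set (Matrix (Fin 2) (Fin 2) B) :=
  {m | ∀ w ∈ nbrLattice ρ πB v, m.mulVec w ∈ nbrLattice ρ πB v}

namespace NBL
variable {𝔹 : Type*} [Field 𝔹]
variable {ρ : AbsoluteValue B ℝ} {πB : B} {OB : Subring B} {φ : OB →+* 𝔹}
open scoped Classical in
def resB (OB : Subring B) (φ : OB →+* 𝔹) (x : B) : 𝔹 := if h : x ∈ OB then φ ⟨x, h⟩ else 0
def resVec (OB : Subring B) (φ : OB →+* 𝔹) (v : Fin 2 → B) : Fin 2 → 𝔹 := fun i => resB OB φ (v i)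
lemma resB_of_mem {x : B} (h : x ∈ OB) : resB OB φ x = φ ⟨x, h⟩ := dif_pos h
variable (hOB : ∀ x : B, x ∈ OB ↔ ρ x ≤ 1)
include hOB
lemma resB_add {x y : B} (hx : ρ x ≤ 1) (hy : ρ y ≤ 1) :
    resB OB φ (x + y) = resB OB φ x + resB OB φ y := by
  have hx' := (hOB x).mpr hx; have hy' := (hOB y).mpr hy
  rw [resB_of_mem hx', resB_of_mem hy', resB_of_mem (add_mem hx' hy'), ← map_add]; rfl
lemma resB_mul {x y : B} (hx : ρ x ≤ 1) (hy : ρ y ≤ 1) :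
    resB OB φ (x * y) = resB OB φ x * resB OB φ y := by
  have hx' := (hOB x).mpr hx; have hy' := (hOB y).mpr hy
  rw [resB_of_mem hx', resB_of_mem hy', resB_of_mem (mul_mem hx' hy'), ← map_mul]; rfl
lemma resB_neg {x : B} (hx : ρ x ≤ 1) : resB OB φ (-x) = - resB OB φ x := by
  have hx' := (hOB x).mpr hx
  rw [resB_of_mem hx', resB_of_mem (neg_mem hx'), ← map_neg]; rfl

variable (hφker : ∀ x : OB, φ x = 0 ↔ ρ (x : B) < 1)
variable (hφsurj : Function.Surjective φ)
include hφker
lemma resB_eq_zero_iff {x : B} (hx : ρ x ≤ 1) : resB OB φ x = 0 ↔ ρ x < 1 := by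
  rw [resB_of_mem ((hOB x).mpr hx), hφker]

omit hOB hφker hφsurj

variable (hna : IsNonarchimedean ρ)
variable (hπ0 : 0 < ρ πB) (hπ1 : ρ πB < 1)
variable (hπmax : ∀ x : B, x ≠ 0 → ρ x < 1 → ρ x ≤ ρ πB)

include hπ0 in
lemma πB_ne_zero : πB ≠ 0 := by
  intro h; rw [h, map_zero] at hπ0; exact lt_irrefl 0 hπ0

include hπ0 hπmax hOB hφker in
lemma le_πB_of_res_zero {x : B} (hx : ρ x ≤ 1) (h0 : resB OB φ x = 0) : ρ x ≤ ρ πB := by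
  rcases eq_or_ne x 0 with rfl | hne
  · simpa using hπ0.le
  · exact hπmax x hne ((resB_eq_zero_iff hOB hφker hx).mp h0)

include hna hOB hφker hφsurj hπ0 hπ1 hπmax in
/-- Characterization of the lattice. -/
lemma mem_nbrLattice_iff {v : Fin 2 → B} (hv : ∀ i, ρ (v i) ≤ 1) (w : Fin 2 → B) :
    w ∈ nbrLattice ρ πB v ↔
      (∀ i, ρ (w i) ≤ 1) ∧ resVec OB φ w ∈ span 𝔹 {resVec OB φ v} := by
  constructor
  · rintro ⟨z, b, hz, hb, rfl⟩
    have hzπ : ∀ i, ρ (z i * πB) ≤ 1 := fun i => by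
      rw [map_mul]
      calc ρ (z i) * ρ πB ≤ 1 * 1 := by
            exact mul_le_mul (hz i) hπ1.le (ρ.nonneg _) zero_le_one
        _ = 1 := one_mul 1
    have hvb : ∀ i, ρ (v i * b) ≤ 1 := fun i => by
      rw [map_mul]
      calc ρ (v i) * ρ b ≤ 1 * 1 := mul_le_mul (hv i) hb (ρ.nonneg _) zero_le_one
        _ = 1 := one_mul 1
    have hbound : ∀ i, ρ (z i * πB + v i * b) ≤ 1 := fun i =>
      le_trans (hna _ _) (max_le (hzπ i) (hvb i))
    refine ⟨hbound, ?_⟩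
    have hres : resVec OB φ (fun i => z i * πB + v i * b) =
        resB OB φ b • resVec OB φ v := by
      funext i
      have h1 : resB OB φ (z i * πB) = 0 := by
        rw [resB_mul hOB (hz i) hπ1.le,
          (resB_eq_zero_iff hOB hφker hπ1.le).mpr hπ1, mul_zero]
      show resB OB φ (z i * πB + v i * b) = resB OB φ b * resB OB φ (v i)
      rw [resB_add hOB (hzπ i) (hvb i), h1, resB_mul hOB (hv i) hb, zero_add, mul_comm]
    rw [hres]
    exact smul_mem _ _ (mem_span_singleton_self _)
  · rintro ⟨hbound, hspan⟩
    obtain ⟨c, hc⟩ := mem_span_singleton.mp hspan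
    obtain ⟨b, hb⟩ := hφsurj c
    have hbB : ρ (b : B) ≤ 1 := (hOB _).mp b.2
    have hresb : resB OB φ (b : B) = c := by
      rw [resB_of_mem b.2, Subtype.coe_eta, hb]
    have hsub : ∀ i, ρ (w i - v i * (b : B)) ≤ ρ πB := by
      intro i
      have hvb : ρ (v i * (b : B)) ≤ 1 := by
        rw [map_mul]
        calc ρ (v i) * ρ (b:B) ≤ 1 * 1 := mul_le_mul (hv i) hbB (ρ.nonneg _) zero_le_one
          _ = 1 := one_mul 1
      have hb1 : ρ (w i - v i * (b : B)) ≤ 1 := by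
        rw [sub_eq_add_neg]
        refine le_trans (hna _ _) (max_le (hbound i) ?_)
        rw [ρ.map_neg]; exact hvb
      refine le_πB_of_res_zero hOB hφker hπ0 hπmax hb1 ?_
      rw [sub_eq_add_neg, resB_add hOB (hbound i) (by rw [ρ.map_neg]; exact hvb),
        resB_neg hOB hvb, resB_mul hOB (hv i) hbB, hresb]
      have : resB OB φ (w i) = c * resB OB φ (v i) := (congrFun hc i).symm
      rw [this, mul_comm]; ring
    refine ⟨fun i => (w i - v i * (b : B)) * πB⁻¹, (b : B), fun i => ?_, hbB, ?_⟩
    · rw [map_mul, map_inv₀]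
      rw [← div_eq_mul_inv]
      exact div_le_one_of_le₀ (hsub i) hπ0.le
    · funext i
      have hπne : πB ≠ 0 := πB_ne_zero hπ0
      rw [mul_assoc, inv_mul_cancel₀ hπne, mul_one, sub_add_cancel]

end NBL

namespace NBL2
open NBL
variable {B : Type*} [DivisionRing B] {𝔹 : Type*} [Field 𝔹]
variable {ρ : AbsoluteValue B ℝ} {πB : B} {OB : Subring B} {φ : OB →+* 𝔹}
variable (hOB : ∀ x : B, x ∈ OB ↔ ρ x ≤ 1)
variable (hφker : ∀ x : OB, φ x = 0 ↔ ρ (x : B) < 1)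
variable (hφsurj : Function.Surjective φ)
variable (hna : IsNonarchimedean ρ)
variable (hπ0 : 0 < ρ πB) (hπ1 : ρ πB < 1)
variable (hπmax : ∀ x : B, x ≠ 0 → ρ x < 1 → ρ x ≤ ρ πB)

include hna in
lemma mulVec_bound {m : Matrix (Fin 2) (Fin 2) B} {w : Fin 2 → B}
    (hm : ∀ i j, ρ (m i j) ≤ 1) (hw : ∀ i, ρ (w i) ≤ 1) (i : Fin 2) :
    ρ (m.mulVec w i) ≤ 1 := by
  have : m.mulVec w i = m i 0 * w 0 + m i 1 * w 1 := by
    simp [Matrix.mulVec, dotProduct, Fin.sum_univ_two]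
  rw [this]
  refine le_trans (hna _ _) (max_le ?_ ?_) <;>
  · rw [map_mul]
    calc ρ (m i _) * ρ (w _) ≤ 1 * 1 :=
          mul_le_mul (hm i _) (hw _) (ρ.nonneg _) zero_le_one
      _ = 1 := one_mul 1

include hOB in
lemma resVec_mulVec {m : Matrix (Fin 2) (Fin 2) B} {w : Fin 2 → B}
    (hm : ∀ i j, ρ (m i j) ≤ 1) (hw : ∀ i, ρ (w i) ≤ 1) :
    resVec OB φ (m.mulVec w) =
      (Matrix.of fun i j => resB OB φ (m i j)).mulVec (resVec OB φ w) := by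
  funext i
  have h1 : m.mulVec w i = m i 0 * w 0 + m i 1 * w 1 := by
    simp [Matrix.mulVec, dotProduct, Fin.sum_univ_two]
  have h2 : (Matrix.of fun i j => resB OB φ (m i j)).mulVec (resVec OB φ w) i
      = resB OB φ (m i 0) * resB OB φ (w 0) + resB OB φ (m i 1) * resB OB φ (w 1) := by
    simp [Matrix.mulVec, dotProduct, Fin.sum_univ_two, resVec]
  show resB OB φ (m.mulVec w i) = _
  rw [h1, h2]
  have hp : ∀ j, ρ (m i j * w j) ≤ 1 := fun j => by
    rw [map_mul]
    calc ρ (m i j) * ρ (w j) ≤ 1 * 1 :=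
          mul_le_mul (hm i j) (hw j) (ρ.nonneg _) zero_le_one
      _ = 1 := one_mul 1
  rw [resB_add hOB (hp 0) (hp 1), resB_mul hOB (hm i 0) (hw 0), resB_mul hOB (hm i 1) (hw 1)]

include hOB hφker hφsurj hna hπ0 hπ1 hπmax in
/-- Integral matrices lie in the neighbor order iff the residue matrix stabilizes the line. -/
lemma mem_nbrOrder_iff {v : Fin 2 → B} (hv : ∀ i, ρ (v i) ≤ 1)
    {m : Matrix (Fin 2) (Fin 2) B} (hm : ∀ i j, ρ (m i j) ≤ 1) :
    m ∈ nbrOrder ρ πB v ↔ ∀ u ∈ span 𝔹 {resVec OB φ v},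
      (Matrix.of fun i j => resB OB φ (m i j)).mulVec u ∈ span 𝔹 {resVec OB φ v} := by
  constructor
  · intro hmem u hu
    obtain ⟨c, hc⟩ := mem_span_singleton.mp hu
    obtain ⟨b, hb⟩ := hφsurj c
    have hbB : ρ (b : B) ≤ 1 := (hOB _).mp b.2
    set w : Fin 2 → B := fun i => v i * (b : B) with hw
    have hwlat : w ∈ nbrLattice ρ πB v := by
      refine ⟨0, (b : B), fun i => by simp, hbB, ?_⟩
      funext i; simp [hw]
    have hwb : ∀ i, ρ (w i) ≤ 1 := fun i => by
      rw [hw, map_mul]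
      calc ρ (v i) * ρ (b:B) ≤ 1 * 1 := mul_le_mul (hv i) hbB (ρ.nonneg _) zero_le_one
        _ = 1 := one_mul 1
    have hresw : resVec OB φ w = u := by
      funext i
      show resB OB φ (v i * (b : B)) = u i
      rw [resB_mul hOB (hv i) hbB, resB_of_mem b.2, Subtype.coe_eta, hb,
        mul_comm, ← hc]
      rfl
    have := hmem w hwlat
    rw [mem_nbrLattice_iff hOB hφker hφsurj hna hπ0 hπ1 hπmax hv] at this
    have hres := this.2
    rwa [resVec_mulVec hOB hm hwb, hresw] at hres
  · intro hstab w hwlat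
    rw [mem_nbrLattice_iff hOB hφker hφsurj hna hπ0 hπ1 hπmax hv] at hwlat ⊢
    obtain ⟨hwb, hwres⟩ := hwlat
    refine ⟨mulVec_bound hna hm hwb, ?_⟩
    rw [resVec_mulVec hOB hm hwb]
    exact hstab _ hwres

include hOB hφker hφsurj hna hπ0 hπ1 hπmax in
lemma nbrOrder_eq_of_span_eq {v v' : Fin 2 → B} (hv : ∀ i, ρ (v i) ≤ 1)
    (hv' : ∀ i, ρ (v' i) ≤ 1)
    (hsp : span 𝔹 {resVec OB φ v} = span 𝔹 {resVec OB φ v'}) :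
    nbrOrder ρ πB v = nbrOrder ρ πB v' := by
  have hlat : nbrLattice ρ πB v = nbrLattice ρ πB v' := by
    ext w
    rw [mem_nbrLattice_iff hOB hφker hφsurj hna hπ0 hπ1 hπmax hv,
      mem_nbrLattice_iff hOB hφker hφsurj hna hπ0 hπ1 hπmax hv', hsp]
  unfold nbrOrder
  rw [hlat]

end NBL2

namespace NBL3
open NBL NBL2
variable {B : Type*} [DivisionRing B] {𝔹 : Type*} [Field 𝔹]
variable {ρ : AbsoluteValue B ℝ} {πB : B} {OB : Subring B} {φ : OB →+* 𝔹}
variable (hOB : ∀ x : B, x ∈ OB ↔ ρ x ≤ 1)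
variable (hφker : ∀ x : OB, φ x = 0 ↔ ρ (x : B) < 1)
variable (hφsurj : Function.Surjective φ)
variable (hna : IsNonarchimedean ρ)
variable (hπ0 : 0 < ρ πB) (hπ1 : ρ πB < 1)
variable (hπmax : ∀ x : B, x ≠ 0 → ρ x < 1 → ρ x ≤ ρ πB)

/-- the determinant functional: kills `a`, detects vectors off the line of `a`. -/
lemma det_funct {a u : Fin 2 → 𝔹} (ha : a ≠ 0) (hu : u ∉ span 𝔹 {a}) :
    a 1 * u 0 - a 0 * u 1 ≠ 0 := by
  intro h
  apply hu
  rcases eq_or_ne (a 0) 0 with h0 | h0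
  · have h1 : a 1 ≠ 0 := by
      intro h1; apply ha; funext i; fin_cases i <;> simp [h0, h1]
    have hu0 : u 0 = 0 := by
      rw [h0, zero_mul, sub_zero] at h; exact (mul_eq_zero.mp h).resolve_left h1
    refine mem_span_singleton.mpr ⟨u 1 / a 1, ?_⟩
    funext i; fin_cases i <;> simp [h0, hu0, div_mul_cancel₀ _ h1]
  · refine mem_span_singleton.mpr ⟨u 0 / a 0, ?_⟩
    funext i
    fin_cases i
    · show u 0 / a 0 * a 0 = u 0
      rw [div_mul_cancel₀ _ h0]
    · show u 0 / a 0 * a 1 = u 1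
      field_simp
      linear_combination h

include hOB hφker hφsurj hna hπ0 hπ1 hπmax in
lemma nbrOrder_ne {v v' : Fin 2 → B} (hv : ∀ i, ρ (v i) ≤ 1)
    (hv' : ∀ i, ρ (v' i) ≤ 1)
    (ha : resVec OB φ v ≠ 0)
    (hne : resVec OB φ v' ∉ span 𝔹 {resVec OB φ v}) :
    nbrOrder ρ πB v ≠ nbrOrder ρ πB v' := by
  set a := resVec OB φ v with hadef
  -- lift of the functional coefficients
  obtain ⟨g0, hg0⟩ := hφsurj (a 1)
  obtain ⟨g1, hg1⟩ := hφsurj (-(a 0))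
  have hg0B : ρ (g0 : B) ≤ 1 := (hOB _).mp g0.2
  have hg1B : ρ (g1 : B) ≤ 1 := (hOB _).mp g1.2
  have hres_g0 : resB OB φ (g0 : B) = a 1 := by rw [resB_of_mem g0.2, Subtype.coe_eta, hg0]
  have hres_g1 : resB OB φ (g1 : B) = -(a 0) := by rw [resB_of_mem g1.2, Subtype.coe_eta, hg1]
  set m : Matrix (Fin 2) (Fin 2) B :=
    Matrix.of fun i j => v i * πB⁻¹ * (if j = 0 then (g0:B) else (g1:B)) with hm
  have hπne : πB ≠ 0 := πB_ne_zero hπ0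
  -- the key computation of m.mulVec
  have hmul : ∀ w : Fin 2 → B,
      m.mulVec w = fun i => v i * (πB⁻¹ * ((g0:B) * w 0 + (g1:B) * w 1)) := by
    intro w; funext i
    have : m.mulVec w i = m i 0 * w 0 + m i 1 * w 1 := by
      simp [Matrix.mulVec, dotProduct, Fin.sum_univ_two]
    rw [this]
    simp only [hm, Matrix.of_apply, if_pos rfl, if_neg (by decide : ¬(1 : Fin 2) = 0)]
    noncomm_ring
    abel
  -- residue of the functional applied to a residue vector
  have hsval : ∀ w : Fin 2 → B, (∀ i, ρ (w i) ≤ 1) →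
      ρ ((g0:B) * w 0 + (g1:B) * w 1) ≤ 1 ∧
      resB OB φ ((g0:B) * w 0 + (g1:B) * w 1)
        = a 1 * resVec OB φ w 0 - a 0 * resVec OB φ w 1 := by
    intro w hw
    have hp0 : ρ ((g0:B) * w 0) ≤ 1 := by
      rw [map_mul]
      calc ρ (g0:B) * ρ (w 0) ≤ 1 * 1 := mul_le_mul hg0B (hw 0) (ρ.nonneg _) zero_le_one
        _ = 1 := one_mul 1
    have hp1 : ρ ((g1:B) * w 1) ≤ 1 := by
      rw [map_mul]
      calc ρ (g1:B) * ρ (w 1) ≤ 1 * 1 := mul_le_mul hg1B (hw 1) (ρ.nonneg _) zero_le_one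
        _ = 1 := one_mul 1
    refine ⟨le_trans (hna _ _) (max_le hp0 hp1), ?_⟩
    rw [resB_add hOB hp0 hp1, resB_mul hOB hg0B (hw 0), resB_mul hOB hg1B (hw 1),
      hres_g0, hres_g1]
    ring_nf
    rfl
  -- m belongs to nbrOrder v
  have hmem : m ∈ nbrOrder ρ πB v := by
    intro w hwlat
    rw [mem_nbrLattice_iff hOB hφker hφsurj hna hπ0 hπ1 hπmax hv] at hwlat
    obtain ⟨hwb, hwres⟩ := hwlat
    obtain ⟨c, hc⟩ := mem_span_singleton.mp hwres
    obtain ⟨hsb, hsres⟩ := hsval w hwb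
    have hszero : resB OB φ ((g0:B) * w 0 + (g1:B) * w 1) = 0 := by
      rw [hsres, ← hc]
      show a 1 * (c * a 0) - a 0 * (c * a 1) = 0
      ring
    have hsle : ρ ((g0:B) * w 0 + (g1:B) * w 1) ≤ ρ πB :=
      le_πB_of_res_zero hOB hφker hπ0 hπmax hsb hszero
    rw [hmul w]
    refine ⟨0, πB⁻¹ * ((g0:B) * w 0 + (g1:B) * w 1), fun i => by simp, ?_, ?_⟩
    · rw [map_mul, map_inv₀]
      calc (ρ πB)⁻¹ * ρ ((g0:B) * w 0 + (g1:B) * w 1) ≤ (ρ πB)⁻¹ * ρ πB :=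
            mul_le_mul_of_nonneg_left hsle (inv_nonneg.mpr hπ0.le)
        _ = 1 := inv_mul_cancel₀ hπ0.ne'
    · funext i; simp
  -- m does not belong to nbrOrder v'
  have hnotmem : m ∉ nbrOrder ρ πB v' := by
    intro hmem'
    have hv'lat : v' ∈ nbrLattice ρ πB v' :=
      ⟨0, 1, fun i => by simp, by simp, by funext i; simp⟩
    have := hmem' v' hv'lat
    rw [mem_nbrLattice_iff hOB hφker hφsurj hna hπ0 hπ1 hπmax hv'] at this
    obtain ⟨hbnd, -⟩ := this
    -- the functional value on v' is a unit
    obtain ⟨hsb', hsres'⟩ := hsval v' hv'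
    have hsne : resB OB φ ((g0:B) * v' 0 + (g1:B) * v' 1) ≠ 0 := by
      rw [hsres']; exact det_funct ha hne
    have hs1 : ρ ((g0:B) * v' 0 + (g1:B) * v' 1) = 1 := by
      refine le_antisymm hsb' (not_lt.mp fun hlt => hsne ?_)
      exact (resB_eq_zero_iff hOB hφker hsb').mpr hlt
    -- some coordinate of v has absolute value 1
    obtain ⟨i, hi⟩ : ∃ i, a i ≠ 0 := by
      by_contra hcon
      push_neg at hcon
      exact ha (funext hcon)
    have hvi : ρ (v i) = 1 := by
      refine le_antisymm (hv i) (not_lt.mp fun hlt => hi ?_)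
      exact (resB_eq_zero_iff hOB hφker (hv i)).mpr hlt
    have hfin := hbnd i
    rw [hmul v'] at hfin
    simp only [map_mul, map_inv₀, hvi, hs1] at hfin
    have hgt : (1 : ℝ) < (ρ πB)⁻¹ := (one_lt_inv₀ hπ0).mpr hπ1
    linarith
  intro heq
  rw [heq] at hmem
  exact hnotmem hmem

end NBL3
namespace NBL4
variable {𝔹 : Type*} [Field 𝔹]

lemma exists_generator (ℓ : Submodule 𝔹 (Fin 2 → 𝔹)) (h : finrank 𝔹 ℓ = 1) :
    ∃ a : Fin 2 → 𝔹, a ≠ 0 ∧ ℓ = span 𝔹 {a} := by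
  have hne : ℓ ≠ ⊥ := by
    intro hbot
    rw [hbot, finrank_bot] at h
    exact zero_ne_one h
  obtain ⟨a, haℓ, ha0⟩ := Submodule.exists_mem_ne_zero_of_ne_bot hne
  refine ⟨a, ha0, ?_⟩
  refine (Submodule.eq_of_le_of_finrank_eq ((span_singleton_le_iff_mem a ℓ).mpr haℓ) ?_).symm
  rw [h, finrank_span_singleton ha0]

lemma pair_coeff_zero {a1 a2 : Fin 2 → 𝔹} (h1 : a1 ≠ 0) (h2 : a2 ∉ span 𝔹 {a1})
    {α β : 𝔹} (h : α • a1 + β • a2 = 0) : α = 0 ∧ β = 0 := by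
  have hβ : β = 0 := by
    by_contra hβ
    apply h2
    refine mem_span_singleton.mpr ⟨-(β⁻¹ * α), ?_⟩
    have : β • a2 = -(α • a1) := by
      rw [← add_eq_zero_iff_eq_neg]; rw [add_comm]; exact h
    calc -(β⁻¹ * α) • a1 = β⁻¹ • (-(α • a1)) := by
          rw [smul_neg, smul_smul, ← neg_smul]
      _ = β⁻¹ • (β • a2) := by rw [this]
      _ = a2 := by rw [smul_smul, inv_mul_cancel₀ hβ, one_smul]
  refine ⟨?_, hβ⟩
  rw [hβ, zero_smul, add_zero] at h
  exact (smul_eq_zero.mp h).resolve_right h1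

lemma pair_span_top {a1 a2 : Fin 2 → 𝔹} (h1 : a1 ≠ 0) (h2 : a2 ∉ span 𝔹 {a1}) :
    span 𝔹 {a1, a2} = ⊤ := by
  have hind : LinearIndependent 𝔹 ![a2, a1] := by
    rw [linearIndependent_fin2]
    refine ⟨h1, fun c hc => h2 (mem_span_singleton.mpr ⟨c, ?_⟩)⟩
    simpa using hc
  have := hind.span_eq_top_of_card_eq_finrank (by simp)
  rw [← this]
  congr 1
  simp [Set.pair_comm a1 a2]

/-- A matrix stabilizing three distinct lines stabilizes every line. -/
lemma stab_all_of_three {ℓ1 ℓ2 ℓ3 : Submodule 𝔹 (Fin 2 → 𝔹)}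
    (hr1 : finrank 𝔹 ℓ1 = 1) (hr2 : finrank 𝔹 ℓ2 = 1) (hr3 : finrank 𝔹 ℓ3 = 1)
    (h12 : ℓ1 ≠ ℓ2) (h13 : ℓ1 ≠ ℓ3) (h23 : ℓ2 ≠ ℓ3)
    {M : Matrix (Fin 2) (Fin 2) 𝔹}
    (hs1 : ∀ w ∈ ℓ1, M.mulVec w ∈ ℓ1) (hs2 : ∀ w ∈ ℓ2, M.mulVec w ∈ ℓ2)
    (hs3 : ∀ w ∈ ℓ3, M.mulVec w ∈ ℓ3) :
    ∀ u : Fin 2 → 𝔹, M.mulVec u ∈ span 𝔹 {u} := by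
  obtain ⟨a1, ha1, rfl⟩ := exists_generator ℓ1 hr1
  obtain ⟨a2, ha2, rfl⟩ := exists_generator ℓ2 hr2
  obtain ⟨a3, ha3, rfl⟩ := exists_generator ℓ3 hr3
  have hsp : ∀ {x y : Fin 2 → 𝔹}, x ≠ 0 → y ≠ 0 →
      span 𝔹 {x} ≠ span 𝔹 {y} → y ∉ span 𝔹 {x} := by
    intro x y hx hy hne hmem
    apply hne
    refine (Submodule.eq_of_le_of_finrank_eq ((span_singleton_le_iff_mem y _).mpr hmem) ?_).symm
    rw [finrank_span_singleton hx, finrank_span_singleton hy]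
  have h2n1 := hsp ha1 ha2 h12
  have h3n1 := hsp ha1 ha3 h13
  have h3n2 := hsp ha2 ha3 h23
  -- a3 = c1 a1 + c2 a2 with c1, c2 ≠ 0
  have htop := pair_span_top ha1 h2n1
  obtain ⟨c1, c2, hc⟩ := mem_span_pair.mp (htop ▸ mem_top : a3 ∈ span 𝔹 {a1, a2})
  have hc1 : c1 ≠ 0 := by
    rintro rfl
    apply h3n2
    rw [zero_smul, zero_add] at hc
    exact mem_span_singleton.mpr ⟨c2, hc⟩
  have hc2 : c2 ≠ 0 := by
    rintro rfl
    apply h3n1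
    rw [zero_smul, add_zero] at hc
    exact mem_span_singleton.mpr ⟨c1, hc⟩
  -- eigenvalues
  obtain ⟨lam1, hl1⟩ := mem_span_singleton.mp (hs1 a1 (mem_span_singleton_self a1))
  obtain ⟨lam2, hl2⟩ := mem_span_singleton.mp (hs2 a2 (mem_span_singleton_self a2))
  obtain ⟨mu, hmu⟩ := mem_span_singleton.mp (hs3 a3 (mem_span_singleton_self a3))
  have hMa3 : M.mulVec a3 = (c1 * lam1) • a1 + (c2 * lam2) • a2 := by
    rw [← hc, Matrix.mulVec_add, Matrix.mulVec_smul, Matrix.mulVec_smul, ← hl1, ← hl2,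
      smul_smul, smul_smul]
  have h3 : (c1 * lam1) • a1 + (c2 * lam2) • a2 = (mu * c1) • a1 + (mu * c2) • a2 := by
    rw [← hMa3, ← hmu, ← hc, smul_add, smul_smul, smul_smul]
  have heq : (c1 * lam1 - mu * c1) • a1 + (c2 * lam2 - mu * c2) • a2 = 0 := by
    rw [sub_smul, sub_smul, sub_add_sub_comm, h3, sub_self]
  obtain ⟨hz1, hz2⟩ := pair_coeff_zero ha1 h2n1 heq
  have hlam1 : lam1 = mu := by
    refine mul_left_cancel₀ hc1 ?_
    linear_combination hz1
  have hlam2 : lam2 = mu := by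
    refine mul_left_cancel₀ hc2 ?_
    linear_combination hz2
  -- M acts as the scalar mu
  intro u
  have hu : u ∈ span 𝔹 {a1, a2} := htop ▸ mem_top
  obtain ⟨d1, d2, hd⟩ := mem_span_pair.mp hu
  have : M.mulVec u = mu • u := by
    rw [← hd, Matrix.mulVec_add, Matrix.mulVec_smul, Matrix.mulVec_smul, ← hl1, ← hl2,
      hlam1, hlam2, smul_add, smul_smul, smul_smul, smul_smul, smul_smul,
      mul_comm d1 mu, mul_comm d2 mu]
  rw [this]
  exact smul_mem _ _ (mem_span_singleton_self u)

/-- The number of lines in 𝔹² is q+1. -/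
lemma card_lines [Fintype 𝔹] :
    Nat.card {ℓ : Submodule 𝔹 (Fin 2 → 𝔹) // finrank 𝔹 ℓ = 1} = Fintype.card 𝔹 + 1 := by
  classical
  have hline : ∀ t : 𝔹, (![1, t] : Fin 2 → 𝔹) ≠ 0 := by
    intro t h
    have := congrFun h 0
    simp at this
  have hinf : (![0, 1] : Fin 2 → 𝔹) ≠ 0 := by
    intro h
    have := congrFun h 1
    simp at this
  set f : Option 𝔹 → {ℓ : Submodule 𝔹 (Fin 2 → 𝔹) // finrank 𝔹 ℓ = 1} :=
    fun o => match o with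
    | some t => ⟨span 𝔹 {![1, t]}, finrank_span_singleton (hline t)⟩
    | none => ⟨span 𝔹 {![0, 1]}, finrank_span_singleton hinf⟩ with hf
  have hbij : Function.Bijective f := by
    constructor
    · rintro (_ | t) (_ | t') h <;> simp only [hf, Subtype.mk.injEq] at h
      · rfl
      · exfalso
        have : (![1, t'] : Fin 2 → 𝔹) ∈ span 𝔹 {![0, 1]} := by
          rw [h]; exact mem_span_singleton_self _
        obtain ⟨c, hc⟩ := mem_span_singleton.mp this
        have := congrFun hc 0
        simp at this
      · exfalso
        have : (![1, t] : Fin 2 → 𝔹) ∈ span 𝔹 {![0, 1]} := by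
          rw [← h]; exact mem_span_singleton_self _
        obtain ⟨c, hc⟩ := mem_span_singleton.mp this
        have := congrFun hc 0
        simp at this
      · have : (![1, t'] : Fin 2 → 𝔹) ∈ span 𝔹 {![1, t]} := by
          rw [h]; exact mem_span_singleton_self _
        obtain ⟨c, hc⟩ := mem_span_singleton.mp this
        have hc0 := congrFun hc 0
        simp at hc0
        have hc1 := congrFun hc 1
        rw [hc0] at hc1
        simp at hc1
        rw [hc1]
    · rintro ⟨ℓ, hℓ⟩
      obtain ⟨a, ha, rfl⟩ := exists_generator ℓ hℓ
      rcases eq_or_ne (a 0) 0 with h0 | h0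
      · refine ⟨none, ?_⟩
        simp only [hf, Subtype.mk.injEq]
        have h1 : a 1 ≠ 0 := by
          intro h1; apply ha; funext i; fin_cases i <;> simp [h0, h1]
        have heq : a = a 1 • ![0, 1] := by
          funext i; fin_cases i <;> simp [h0]
        have key : span 𝔹 {a} = span 𝔹 {![0, 1]} := by
          nth_rewrite 1 [heq]
          exact Submodule.span_singleton_smul_eq (IsUnit.mk0 _ h1) _
        exact key.symm
      · refine ⟨some (a 1 / a 0), ?_⟩
        simp only [hf, Subtype.mk.injEq]
        have heq : a = a 0 • ![1, a 1 / a 0] := by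
          funext i
          fin_cases i
          · simp
          · show a 1 = a 0 * (a 1 / a 0)
            rw [mul_div_cancel₀ _ h0]
        have key : span 𝔹 {a} = span 𝔹 {![1, a 1 / a 0]} := by
          nth_rewrite 1 [heq]
          exact Submodule.span_singleton_smul_eq (IsUnit.mk0 _ h0) _
        exact key.symm
  rw [← Nat.card_congr (Equiv.ofBijective f hbij)]
  simp [Nat.card_eq_fintype_card]

lemma finite_submodules [Fintype 𝔹] : Finite (Submodule 𝔹 (Fin 2 → 𝔹)) :=
  Finite.of_injective (fun ℓ => (ℓ : Set (Fin 2 → 𝔹))) SetLike.coe_injective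

end NBL4

namespace NBL5
open NBL NBL2 NBL3 NBL4
variable {B : Type*} [DivisionRing B] {𝔹 : Type*} [Field 𝔹]
variable {ρ : AbsoluteValue B ℝ} {πB : B} {OB : Subring B} {φ : OB →+* 𝔹}
variable (hOB : ∀ x : B, x ∈ OB ↔ ρ x ≤ 1)
variable (hφker : ∀ x : OB, φ x = 0 ↔ ρ (x : B) < 1)
variable (hφsurj : Function.Surjective φ)
variable (hna : IsNonarchimedean ρ)
variable (hπ0 : 0 < ρ πB) (hπ1 : ρ πB < 1)
variable (hπmax : ∀ x : B, x ≠ 0 → ρ x < 1 → ρ x ≤ ρ πB)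
variable {H : Subring (Matrix (Fin 2) (Fin 2) B)}

omit [DivisionRing B] in
lemma card_stable_lines [Fintype 𝔹] {M : Type*} (Hs : Set M)
    (res : M → Matrix (Fin 2) (Fin 2) 𝔹) :
    Nat.card {ℓ : Submodule 𝔹 (Fin 2 → 𝔹) // finrank 𝔹 ℓ = 1 ∧
        ∀ m ∈ Hs, ∀ w ∈ ℓ, (res m).mulVec w ∈ ℓ} = 0 ∨
    Nat.card {ℓ : Submodule 𝔹 (Fin 2 → 𝔹) // finrank 𝔹 ℓ = 1 ∧
        ∀ m ∈ Hs, ∀ w ∈ ℓ, (res m).mulVec w ∈ ℓ} = 1 ∨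
    Nat.card {ℓ : Submodule 𝔹 (Fin 2 → 𝔹) // finrank 𝔹 ℓ = 1 ∧
        ∀ m ∈ Hs, ∀ w ∈ ℓ, (res m).mulVec w ∈ ℓ} = 2 ∨
    Nat.card {ℓ : Submodule 𝔹 (Fin 2 → 𝔹) // finrank 𝔹 ℓ = 1 ∧
        ∀ m ∈ Hs, ∀ w ∈ ℓ, (res m).mulVec w ∈ ℓ} = Fintype.card 𝔹 + 1 := by
  classical
  set C : Submodule 𝔹 (Fin 2 → 𝔹) → Prop :=
    fun ℓ => ∀ m ∈ Hs, ∀ w ∈ ℓ, (res m).mulVec w ∈ ℓ with hC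
  haveI : Finite (Submodule 𝔹 (Fin 2 → 𝔹)) := finite_submodules
  haveI : Fintype {ℓ : Submodule 𝔹 (Fin 2 → 𝔹) // finrank 𝔹 ℓ = 1 ∧ C ℓ} :=
    Fintype.ofFinite _
  rcases le_or_gt (Nat.card {ℓ : Submodule 𝔹 (Fin 2 → 𝔹) // finrank 𝔹 ℓ = 1 ∧ C ℓ}) 2
    with hle | hlt
  · interval_cases (Nat.card {ℓ : Submodule 𝔹 (Fin 2 → 𝔹) // finrank 𝔹 ℓ = 1 ∧ C ℓ}) <;>
      tauto
  · right; right; right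
    rw [Nat.card_eq_fintype_card] at hlt ⊢
    obtain ⟨⟨ℓ1, hr1, hC1⟩, ⟨ℓ2, hr2, hC2⟩, ⟨ℓ3, hr3, hC3⟩, h12, h13, h23⟩ :=
      Fintype.two_lt_card_iff.mp hlt
    have h12' : ℓ1 ≠ ℓ2 := fun h => h12 (by simp [Subtype.ext_iff, h])
    have h13' : ℓ1 ≠ ℓ3 := fun h => h13 (by simp [Subtype.ext_iff, h])
    have h23' : ℓ2 ≠ ℓ3 := fun h => h23 (by simp [Subtype.ext_iff, h])
    have hall : ∀ ℓ : Submodule 𝔹 (Fin 2 → 𝔹), C ℓ := by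
      intro ℓ m hm w hw
      have := stab_all_of_three hr1 hr2 hr3 h12' h13' h23'
        (hC1 m hm) (hC2 m hm) (hC3 m hm) w
      exact (Submodule.span_singleton_le_iff_mem w ℓ).mpr hw this
    have : {ℓ : Submodule 𝔹 (Fin 2 → 𝔹) // finrank 𝔹 ℓ = 1 ∧ C ℓ} ≃
        {ℓ : Submodule 𝔹 (Fin 2 → 𝔹) // finrank 𝔹 ℓ = 1} :=
      Equiv.subtypeEquivRight (fun ℓ => ⟨fun h => h.1, fun h => ⟨h, hall ℓ⟩⟩)
    rw [← Nat.card_eq_fintype_card, Nat.card_congr this, card_lines]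

/-- lift of a residue vector -/
def vlift (hφsurj : Function.Surjective φ) (a : Fin 2 → 𝔹) : Fin 2 → B :=
  fun i => ((hφsurj (a i)).choose : B)

include hOB in
lemma vlift_bound (a : Fin 2 → 𝔹) : ∀ i, ρ (vlift hφsurj a i) ≤ 1 :=
  fun i => (hOB _).mp ((hφsurj (a i)).choose.2)

lemma resVec_vlift (a : Fin 2 → 𝔹) : resVec OB φ (vlift hφsurj a) = a := by
  funext i
  show resB OB φ ((hφsurj (a i)).choose : B) = a i
  rw [resB_of_mem ((hφsurj (a i)).choose.2), Subtype.coe_eta]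
  exact (hφsurj (a i)).choose_spec

include hOB hφker hφsurj hna hπ0 hπ1 hπmax in
lemma main_equiv (hH : ∀ m ∈ H, ∀ i j, ρ (m i j) ≤ 1) :
    ∃ F : {ℓ : Submodule 𝔹 (Fin 2 → 𝔹) // finrank 𝔹 ℓ = 1 ∧
        ∀ m ∈ H, ∀ w ∈ ℓ, (Matrix.of fun i j => resB OB φ (m i j)).mulVec w ∈ ℓ} →
      {Δ : Set (Matrix (Fin 2) (Fin 2) B) //
        (∃ v : Fin 2 → B, (∀ i, ρ (v i) ≤ 1) ∧ (∃ i, ρ πB < ρ (v i)) ∧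
          Δ = nbrOrder ρ πB v) ∧ ∀ m ∈ H, m ∈ Δ},
      Function.Bijective F := by
  classical
  -- the unit criterion
  have hunit : ∀ (a : Fin 2 → 𝔹) (i : Fin 2), a i ≠ 0 → ρ πB < ρ (vlift hφsurj a i) := by
    intro a i hai
    have hb := vlift_bound hOB hφsurj a i
    have : ¬ ρ (vlift hφsurj a i) < 1 := fun hlt => hai (by
      have := (resB_eq_zero_iff hOB hφker hb).mpr hlt
      rwa [show resB OB φ (vlift hφsurj a i) = a i from congrFun (resVec_vlift hφsurj a) i]
        at this)
    calc ρ πB < 1 := hπ1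
      _ ≤ ρ (vlift hφsurj a i) := not_lt.mp this
  have hne_zero : ∀ a : Fin 2 → 𝔹, a ≠ 0 → ∃ i, a i ≠ 0 := by
    intro a ha
    by_contra hcon
    push_neg at hcon
    exact ha (funext hcon)
  -- definition of F
  refine ⟨fun p => ⟨nbrOrder ρ πB (vlift hφsurj (exists_generator p.1 p.2.1).choose), ?_, ?_⟩,
    ?_, ?_⟩
  · -- is a neighbor
    obtain ⟨ha0, hspan⟩ := (exists_generator p.1 p.2.1).choose_spec
    obtain ⟨i, hi⟩ := hne_zero _ ha0
    exact ⟨_, vlift_bound hOB hφsurj _, ⟨i, hunit _ i hi⟩, rfl⟩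
  · -- contains H
    intro m hm
    obtain ⟨ha0, hspan⟩ := (exists_generator p.1 p.2.1).choose_spec
    rw [mem_nbrOrder_iff hOB hφker hφsurj hna hπ0 hπ1 hπmax
      (vlift_bound hOB hφsurj _) (hH m hm)]
    rw [resVec_vlift hφsurj, ← hspan]
    exact p.2.2 m hm
  · -- injective
    rintro ⟨ℓ, h1, h2⟩ ⟨ℓ', h1', h2'⟩ heq
    simp only [Subtype.mk.injEq] at heq
    obtain ⟨ha0, hspan⟩ := (exists_generator ℓ h1).choose_spec
    obtain ⟨ha0', hspan'⟩ := (exists_generator ℓ' h1').choose_spec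
    by_contra hll
    have hll' : ℓ ≠ ℓ' := fun h => hll (Subtype.ext h)
    apply nbrOrder_ne hOB hφker hφsurj hna hπ0 hπ1 hπmax
      (vlift_bound hOB hφsurj (exists_generator ℓ h1).choose)
      (vlift_bound hOB hφsurj (exists_generator ℓ' h1').choose) ?_ ?_ heq
    · rw [resVec_vlift hφsurj]
      exact ha0
    · rw [resVec_vlift hφsurj, resVec_vlift hφsurj, ← hspan]
      intro hmem
      apply hll'
      have hle : span 𝔹 {(exists_generator ℓ' h1').choose} ≤ ℓ :=
        (span_singleton_le_iff_mem _ _).mpr hmem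
      have hkey : span 𝔹 {(exists_generator ℓ' h1').choose} = ℓ :=
        Submodule.eq_of_le_of_finrank_eq hle
          (by rw [finrank_span_singleton ha0', h1])
      rw [hspan', ← hkey]
  · -- surjective
    rintro ⟨Δ, ⟨v, hv, ⟨i0, hi0⟩, rfl⟩, hcont⟩
    set a := resVec OB φ v with hadef
    have hvi0 : ¬ ρ (v i0) < 1 := by
      intro hlt
      have hv0 : v i0 ≠ 0 := by
        intro h
        rw [h, map_zero] at hi0
        exact absurd hi0 (not_lt.mpr hπ0.le)
      exact absurd (hπmax _ hv0 hlt) (not_le.mpr hi0)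
    have ha0 : a ≠ 0 := by
      intro h
      have : resB OB φ (v i0) = 0 := by
        have := congrFun h i0; exact this
      exact hvi0 ((resB_eq_zero_iff hOB hφker (hv i0)).mp this)
    have hr : finrank 𝔹 (span 𝔹 {a}) = 1 := finrank_span_singleton ha0
    have hstab : ∀ m ∈ H, ∀ w ∈ span 𝔹 {a},
        (Matrix.of fun i j => resB OB φ (m i j)).mulVec w ∈ span 𝔹 {a} := by
      intro m hm
      rw [← mem_nbrOrder_iff hOB hφker hφsurj hna hπ0 hπ1 hπmax hv (hH m hm)]
      exact hcont m hm
    refine ⟨⟨span 𝔹 {a}, hr, hstab⟩, ?_⟩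
    apply Subtype.ext
    show nbrOrder ρ πB _ = nbrOrder ρ πB v
    obtain ⟨hg0, hgspan⟩ := (exists_generator (span 𝔹 {a}) hr).choose_spec
    apply nbrOrder_eq_of_span_eq hOB hφker hφsurj hna hπ0 hπ1 hπmax
      (vlift_bound hOB hφsurj _) hv
    rw [resVec_vlift hφsurj, ← hgspan]

end NBL5

open NBL NBL2 NBL3 NBL4 NBL5 in
/-- let Δ₀ = M₂(O_B) and H ⊆ Δ₀ an O_K-order, 𝔹 = O_B/π_B O_B the
(finite) residue field with residue map φ, and ℍ the image of H in M₂(𝔹).  The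
neighbors of Δ₀ in the Bruhat–Tits tree containing H are in bijection with the
one-dimensional ℍ-stable subspaces of 𝔹²; consequently their number is
0, 1, 2, or q^n + 1 where q^n = |𝔹|. -/
theorem neighbors_biject_with_stable_lines
    (ρ : AbsoluteValue B ℝ) (hna : IsNonarchimedean ρ)
    (πB : B)
    (hπB : 0 < ρ πB ∧ ρ πB < 1 ∧ ∀ x : B, x ≠ 0 → ρ x < 1 → ρ x ≤ ρ πB)
    (hdisc : ∀ x : B, x ≠ 0 → ∃ k : ℤ, ρ x = ρ πB ^ k)
    -- the ring of integers O_B and the residue field 𝔹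
    (OB : Subring B) (hOB : ∀ x : B, x ∈ OB ↔ ρ x ≤ 1)
    (𝔹 : Type*) [Field 𝔹] [Fintype 𝔹]
    (φ : OB →+* 𝔹) (hφsurj : Function.Surjective φ)
    (hφker : ∀ x : OB, φ x = 0 ↔ ρ (x : B) < 1)
    -- H is an order contained in Δ₀ = M₂(O_B)
    (H : Subring (Matrix (Fin 2) (Fin 2) B))
    (hH : ∀ m ∈ H, ∀ i j, ρ (m i j) ≤ 1) :
    Nonempty
      ({ℓ : Submodule 𝔹 (Fin 2 → 𝔹) // Module.finrank 𝔹 ℓ = 1 ∧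
          ∀ m (hm : m ∈ H), ∀ w ∈ ℓ,
            (Matrix.of fun i j => φ ⟨m i j, (hOB _).mpr (hH m hm i j)⟩).mulVec w ∈ ℓ} ≃
       {Δ : Set (Matrix (Fin 2) (Fin 2) B) //
          (∃ v : Fin 2 → B, (∀ i, ρ (v i) ≤ 1) ∧ (∃ i, ρ πB < ρ (v i)) ∧
            Δ = nbrOrder ρ πB v) ∧ ∀ m ∈ H, m ∈ Δ}) ∧
    (Nat.card {Δ : Set (Matrix (Fin 2) (Fin 2) B) //
        (∃ v : Fin 2 → B, (∀ i, ρ (v i) ≤ 1) ∧ (∃ i, ρ πB < ρ (v i)) ∧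
          Δ = nbrOrder ρ πB v) ∧ ∀ m ∈ H, m ∈ Δ} = 0 ∨
     Nat.card {Δ : Set (Matrix (Fin 2) (Fin 2) B) //
        (∃ v : Fin 2 → B, (∀ i, ρ (v i) ≤ 1) ∧ (∃ i, ρ πB < ρ (v i)) ∧
          Δ = nbrOrder ρ πB v) ∧ ∀ m ∈ H, m ∈ Δ} = 1 ∨
     Nat.card {Δ : Set (Matrix (Fin 2) (Fin 2) B) //
        (∃ v : Fin 2 → B, (∀ i, ρ (v i) ≤ 1) ∧ (∃ i, ρ πB < ρ (v i)) ∧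
          Δ = nbrOrder ρ πB v) ∧ ∀ m ∈ H, m ∈ Δ} = 2 ∨
     Nat.card {Δ : Set (Matrix (Fin 2) (Fin 2) B) //
        (∃ v : Fin 2 → B, (∀ i, ρ (v i) ≤ 1) ∧ (∃ i, ρ πB < ρ (v i)) ∧
          Δ = nbrOrder ρ πB v) ∧ ∀ m ∈ H, m ∈ Δ} = Fintype.card 𝔹 + 1) := by
  obtain ⟨hπ0, hπ1, hπmax⟩ := hπB
  have hmat : ∀ m (hm : m ∈ H),
      (Matrix.of fun i j => φ ⟨m i j, (hOB _).mpr (hH m hm i j)⟩) =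
      (Matrix.of fun i j => resB OB φ (m i j)) := by
    intro m hm
    funext i j
    simp only [Matrix.of_apply]
    exact (resB_of_mem ((hOB _).mpr (hH m hm i j))).symm
  have e1 : {ℓ : Submodule 𝔹 (Fin 2 → 𝔹) // Module.finrank 𝔹 ℓ = 1 ∧
        ∀ m (hm : m ∈ H), ∀ w ∈ ℓ,
          (Matrix.of fun i j => φ ⟨m i j, (hOB _).mpr (hH m hm i j)⟩).mulVec w ∈ ℓ} ≃
      {ℓ : Submodule 𝔹 (Fin 2 → 𝔹) // Module.finrank 𝔹 ℓ = 1 ∧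
        ∀ m ∈ H, ∀ w ∈ ℓ, (Matrix.of fun i j => resB OB φ (m i j)).mulVec w ∈ ℓ} :=
    Equiv.subtypeEquivRight (fun ℓ => by
      constructor
      · rintro ⟨hr, hs⟩
        exact ⟨hr, fun m hm w hw => by rw [← hmat m hm]; exact hs m hm w hw⟩
      · rintro ⟨hr, hs⟩
        exact ⟨hr, fun m hm w hw => by rw [hmat m hm]; exact hs m hm w hw⟩)
  obtain ⟨F, hF⟩ := main_equiv hOB hφker hφsurj hna hπ0 hπ1 hπmax hH
  have e2 := Equiv.ofBijective F hF
  refine ⟨⟨e1.trans e2⟩, ?_⟩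
  have hcard : Nat.card {Δ : Set (Matrix (Fin 2) (Fin 2) B) //
      (∃ v : Fin 2 → B, (∀ i, ρ (v i) ≤ 1) ∧ (∃ i, ρ πB < ρ (v i)) ∧
        Δ = nbrOrder ρ πB v) ∧ ∀ m ∈ H, m ∈ Δ} =
      Nat.card {ℓ : Submodule 𝔹 (Fin 2 → 𝔹) // Module.finrank 𝔹 ℓ = 1 ∧
        ∀ m ∈ H, ∀ w ∈ ℓ, (Matrix.of fun i j => resB OB φ (m i j)).mulVec w ∈ ℓ} :=
    (Nat.card_congr e2).symm
  rw [hcard]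
  exact card_stable_lines (H : Set (Matrix (Fin 2) (Fin 2) B))
    (fun m => Matrix.of fun i j => resB OB φ (m i j))

end
end

section
/- Let B be a central division algebra over a local field and suppose L ⊆ M₂(B) is a 2n-dimensional commutative semisimple subalgebra that is not a field; then L contains a nontrivial idempotent which may be conjugated to e = diag(1,0), and the set of maximal orders of M₂(B) containing e is exactly {Δ_t : t ∈ ℤ} where Δ_t = (O_B, π_B^t O_B; π_B^{-t} O_B, O_B); since O_L lies in the ring of diagonal matrices with entries in O_B, which is contained in every Δ_t, the branch S(O_L) is a maximal path (a line isomorphic to ℝ-graph) in the Bruhat–Tits tree. -/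
noncomputable section

variable {B : Type*} [DivisionRing B]

/-- A maximal order of M₂(B): a conjugate u·M₂(O_B)·u⁻¹ of the standard maximal
order M₂(O_B). -/
def IsMaxOrder (ρ : AbsoluteValue B ℝ) (Δ : Set (Matrix (Fin 2) (Fin 2) B)) :
    Prop :=
  ∃ u uinv : Matrix (Fin 2) (Fin 2) B, u * uinv = 1 ∧ uinv * u = 1 ∧
    Δ = {x | ∃ m : Matrix (Fin 2) (Fin 2) B,
      (∀ i j, ρ (m i j) ≤ 1) ∧ x = u * m * uinv}

/-- The maximal order Δ_t = (O_B, π_B^t O_B; π_B^{-t} O_B, O_B). -/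
def standardApartmentOrder (ρ : AbsoluteValue B ℝ) (πB : B) (t : ℤ) :
    Set (Matrix (Fin 2) (Fin 2) B) :=
  {m | ρ (m 0 0) ≤ 1 ∧ ρ (m 1 1) ≤ 1 ∧
    ρ (m 0 1) ≤ ρ πB ^ t ∧ ρ (m 1 0) ≤ ρ πB ^ (-t)}

/-- The idempotent e = diag(1,0) in M₂(B). -/
def diagIdem : Matrix (Fin 2) (Fin 2) B :=
  fun i j => if i = 0 ∧ j = 0 then 1 else 0

private def dg (a b : B) : Matrix (Fin 2) (Fin 2) B := Matrix.of ![![a, 0], ![0, b]]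

private lemma dg_mul_mul (a b c d : B) (m : Matrix (Fin 2) (Fin 2) B) :
    dg a b * m * dg c d =
      Matrix.of ![![a * m 0 0 * c, a * m 0 1 * d], ![b * m 1 0 * c, b * m 1 1 * d]] := by
  ext i j
  fin_cases i <;> fin_cases j <;>
    simp [dg, Matrix.mul_apply, Matrix.vecMul, dotProduct, Fin.sum_univ_two]

private lemma dg_mul_dg (a b c d : B) : dg a b * dg c d = dg (a * c) (b * d) := by
  ext i j
  fin_cases i <;> fin_cases j <;>
    simp [dg, Matrix.mul_apply, Matrix.vecMul, dotProduct, Fin.sum_univ_two]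

private lemma dg_one : (dg 1 1 : Matrix (Fin 2) (Fin 2) B) = 1 := by
  ext i j
  fin_cases i <;> fin_cases j <;> simp [dg, Matrix.one_apply]

private lemma mint_mul (ρ : AbsoluteValue B ℝ) (hna : IsNonarchimedean ρ)
    {m n : Matrix (Fin 2) (Fin 2) B}
    (hm : ∀ i j, ρ (m i j) ≤ 1) (hn : ∀ i j, ρ (n i j) ≤ 1) :
    ∀ i j, ρ ((m * n) i j) ≤ 1 := by
  intro i j
  rw [Matrix.mul_apply, Fin.sum_univ_two]
  refine le_trans (hna _ _) (max_le ?_ ?_) <;>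
    · rw [map_mul]
      exact mul_le_one₀ (by apply_rules) (ρ.nonneg _) (by apply_rules)

private lemma scal {P Q y : ℝ} (hP : 0 < P) (hQ : 0 < Q) :
    P⁻¹ * y * Q ≤ 1 ↔ y ≤ P * Q⁻¹ := by
  rw [show P⁻¹ * y * Q = y * Q / P by ring, div_le_one hP, ← le_div_iff₀ hQ,
    div_eq_mul_inv]

/-- Theorem 1.1, part 3, key step: suppose O_L ⊆ M₂(B) is an
order consisting of diagonal matrices with integral entries and containing the
nontrivial idempotent e = diag(1,0) (as happens, after conjugation, for the ring
of integers of a 2n-dimensional commutative semisimple subalgebra L that is not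
a field).  Then the maximal orders containing O_L are exactly the orders
Δ_t = (O_B, π_B^t O_B; π_B^{-t} O_B, O_B), t ∈ ℤ; i.e. the branch S(O_L) is a
maximal path in the Bruhat–Tits tree. -/
theorem branch_of_nonfield_is_maximal_path
    (ρ : AbsoluteValue B ℝ) (hna : IsNonarchimedean ρ)
    (πB : B)
    (hπB : 0 < ρ πB ∧ ρ πB < 1 ∧ ∀ x : B, x ≠ 0 → ρ x < 1 → ρ x ≤ ρ πB)
    (hdisc : ∀ x : B, x ≠ 0 → ∃ k : ℤ, ρ x = ρ πB ^ k)
    (OL : Subring (Matrix (Fin 2) (Fin 2) B))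
    (hdiag : ∀ m ∈ OL, m 0 1 = 0 ∧ m 1 0 = 0 ∧ ρ (m 0 0) ≤ 1 ∧ ρ (m 1 1) ≤ 1)
    (hidem : (diagIdem : Matrix (Fin 2) (Fin 2) B) ∈ OL) :
    {Δ : Set (Matrix (Fin 2) (Fin 2) B) | IsMaxOrder ρ Δ ∧ ∀ m ∈ OL, m ∈ Δ} =
      {Δ | ∃ t : ℤ, Δ = standardApartmentOrder ρ πB t} := by
  obtain ⟨hπpos, hπlt, -⟩ := hπB
  have hπne : ρ πB ≠ 0 := ne_of_gt hπpos
  have hπ0 : πB ≠ 0 := fun h => by simp [h] at hπpos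
  ext Δ
  simp only [Set.mem_setOf_eq]
  constructor
  · rintro ⟨⟨u, v, huv, hvu, rfl⟩, hOL⟩
    -- diagIdem belongs to the order
    obtain ⟨me, hme, heq⟩ := hOL _ hidem
    have hE : v * (diagIdem : Matrix (Fin 2) (Fin 2) B) * u = me := by
      rw [heq]
      calc v * (u * me * v) * u = (v * u) * me * (v * u) := by
            simp only [Matrix.mul_assoc]
        _ = me := by rw [hvu]; simp
    have hEentry : ∀ i j, ρ (v i 0 * u 0 j) ≤ 1 := by
      intro i j
      have h1 : (v * (diagIdem : Matrix (Fin 2) (Fin 2) B) * u) i j = v i 0 * u 0 j := by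
        fin_cases i <;> fin_cases j <;>
          simp [diagIdem, Matrix.mul_apply, Fin.sum_univ_two]
      rw [← h1, hE]; exact hme i j
    have hone : ∀ i j : Fin 2, ρ ((1 : Matrix (Fin 2) (Fin 2) B) i j) ≤ 1 := by
      intro i j
      by_cases h : i = j <;> simp [Matrix.one_apply, h]
    have hFentry : ∀ i j, ρ (v i 1 * u 1 j) ≤ 1 := by
      intro i j
      have h1 : v i 1 * u 1 j = (1 : Matrix (Fin 2) (Fin 2) B) i j - v i 0 * u 0 j := by
        rw [← hvu, Matrix.mul_apply, Fin.sum_univ_two]; exact (add_sub_cancel_left _ _).symm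
      rw [h1, sub_eq_add_neg]
      refine le_trans (hna _ _) (max_le (hone i j) ?_)
      rw [ρ.map_neg]; exact hEentry i j
    -- nonzero rows of u
    have hrow : ∀ i : Fin 2, u i 0 ≠ 0 ∨ u i 1 ≠ 0 := by
      intro i
      by_contra h
      push_neg at h
      have h1 := congrArg (fun M => M i i) huv
      simp only [Matrix.mul_apply, Fin.sum_univ_two, Matrix.one_apply_eq] at h1
      rw [h.1, h.2] at h1
      simp at h1
    have key : ∀ i : Fin 2, (∀ k j, ρ (v k i * u i j) ≤ 1) →
        ∃ p : B, p ≠ 0 ∧ ρ (u i 0) ≤ ρ p ∧ ρ (u i 1) ≤ ρ p ∧ ∀ k, ρ (v k i * p) ≤ 1 := by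
      intro i hent
      rcases le_total (ρ (u i 1)) (ρ (u i 0)) with h | h
      · refine ⟨u i 0, ?_, le_refl _, h, fun k => hent k 0⟩
        intro h0
        rcases hrow i with h' | h'
        · exact h' h0
        · exact h' (ρ.eq_zero.mp (le_antisymm (by rw [h0] at h; simpa using h) (ρ.nonneg _)))
      · refine ⟨u i 1, ?_, h, le_refl _, fun k => hent k 1⟩
        intro h0
        rcases hrow i with h' | h'
        · exact h' (ρ.eq_zero.mp (le_antisymm (by rw [h0] at h; simpa using h) (ρ.nonneg _)))
        · exact h' h0
    obtain ⟨p, hp0, hpu0, hpu1, hpv⟩ := key 0 hEentry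
    obtain ⟨q, hq0, hqu0, hqu1, hqv⟩ := key 1 hFentry
    have hPpos : 0 < ρ p := ρ.pos hp0
    have hQpos : 0 < ρ q := ρ.pos hq0
    obtain ⟨a, ha⟩ := hdisc p hp0
    obtain ⟨b, hb⟩ := hdisc q hq0
    refine ⟨a - b, ?_⟩
    -- the diagonal matrices
    set d : Matrix (Fin 2) (Fin 2) B := dg p q with hd
    set dinv : Matrix (Fin 2) (Fin 2) B := dg p⁻¹ q⁻¹ with hdinv
    have hddinv : d * dinv = 1 := by
      rw [hd, hdinv, dg_mul_dg, mul_inv_cancel₀ hp0, mul_inv_cancel₀ hq0, dg_one]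
    have hdinvd : dinv * d = 1 := by
      rw [hd, hdinv, dg_mul_dg, inv_mul_cancel₀ hp0, inv_mul_cancel₀ hq0, dg_one]
    -- integrality of g = dinv * u and ginv = v * d
    have hgint : ∀ i j, ρ ((dinv * u) i j) ≤ 1 := by
      have h1 : dinv * u = Matrix.of ![![p⁻¹ * u 0 0 * 1, p⁻¹ * u 0 1 * 1],
          ![q⁻¹ * u 1 0 * 1, q⁻¹ * u 1 1 * 1]] := by
        rw [← Matrix.mul_one (dinv * u), ← dg_one, hdinv, dg_mul_mul]
      intro i j
      rw [h1]
      have hiv : ∀ (x c : B), c ≠ 0 → ρ x ≤ ρ c → ρ (c⁻¹ * x * 1) ≤ 1 := by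
        intro x c hc hx
        rw [mul_one, map_mul, map_inv₀, ← inv_mul_cancel₀ (ne_of_gt (ρ.pos hc))]
        exact mul_le_mul_of_nonneg_left hx (by positivity)
      fin_cases i <;> fin_cases j <;>
        simp only [Fin.zero_eta, Fin.mk_one, Matrix.of_apply, Matrix.cons_val_zero,
          Matrix.cons_val_one, Matrix.head_cons] <;>
        [exact hiv _ _ hp0 hpu0; exact hiv _ _ hp0 hpu1;
         exact hiv _ _ hq0 hqu0; exact hiv _ _ hq0 hqu1]
    have hginvint : ∀ i j, ρ ((v * d) i j) ≤ 1 := by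
      have h1 : v * d = Matrix.of ![![1 * v 0 0 * p, 1 * v 0 1 * q],
          ![1 * v 1 0 * p, 1 * v 1 1 * q]] := by
        rw [← Matrix.one_mul (v * d), ← Matrix.mul_assoc, ← dg_one, hd, dg_mul_mul]
      intro i j
      rw [h1]
      fin_cases i <;> fin_cases j <;>
        simp only [Fin.zero_eta, Fin.mk_one, Matrix.of_apply, Matrix.cons_val_zero,
          Matrix.cons_val_one, Matrix.head_cons, one_mul] <;>
        [exact hpv 0; exact hqv 0; exact hpv 1; exact hqv 1]
    -- entrywise description of conjugation by d
    have hconj : ∀ x : Matrix (Fin 2) (Fin 2) B,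
        dinv * x * d = Matrix.of ![![p⁻¹ * x 0 0 * p, p⁻¹ * x 0 1 * q],
          ![q⁻¹ * x 1 0 * p, q⁻¹ * x 1 1 * q]] := by
      intro x; rw [hdinv, hd, dg_mul_mul]
    have hPQ : ρ p * (ρ q)⁻¹ = ρ πB ^ (a - b) := by
      rw [ha, hb, ← zpow_neg, ← zpow_add₀ hπne]; ring_nf
    have hQP : ρ q * (ρ p)⁻¹ = ρ πB ^ (-(a - b)) := by
      rw [ha, hb, ← zpow_neg, ← zpow_add₀ hπne]; ring_nf
    -- the two set inclusions
    ext x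
    simp only [Set.mem_setOf_eq, standardApartmentOrder]
    constructor
    · rintro ⟨m, hm, rfl⟩
      have hint : ∀ i j, ρ ((dinv * (u * m * v) * d) i j) ≤ 1 := by
        have h2 : dinv * (u * m * v) * d = (dinv * u) * m * (v * d) := by
          simp only [Matrix.mul_assoc]
        rw [h2]
        exact mint_mul ρ hna (mint_mul ρ hna hgint hm) hginvint
      rw [hconj] at hint
      have h00 := hint 0 0
      have h01 := hint 0 1
      have h10 := hint 1 0
      have h11 := hint 1 1
      simp only [Matrix.of_apply, Matrix.cons_val_zero, Matrix.cons_val_one,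
        Matrix.head_cons, map_mul, map_inv₀] at h00 h01 h10 h11
      refine ⟨?_, ?_, ?_, ?_⟩
      · have := (scal hPpos hPpos).mp h00
        rwa [mul_inv_cancel₀ (ne_of_gt hPpos)] at this
      · have := (scal hQpos hQpos).mp h11
        rwa [mul_inv_cancel₀ (ne_of_gt hQpos)] at this
      · have := (scal hPpos hQpos).mp h01
        rwa [hPQ] at this
      · have := (scal hQpos hPpos).mp h10
        rwa [hQP] at this
    · rintro ⟨h00, h11, h01, h10⟩
      refine ⟨v * x * u, ?_, ?_⟩
      · have h2 : v * x * u = (v * d) * (dinv * x * d) * (dinv * u) := by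
          calc v * x * u = v * (d * dinv) * x * (d * dinv) * u := by rw [hddinv]; simp
            _ = (v * d) * (dinv * x * d) * (dinv * u) := by simp only [Matrix.mul_assoc]
        rw [h2]
        refine mint_mul ρ hna (mint_mul ρ hna hginvint ?_) hgint
        rw [hconj]
        intro i j
        fin_cases i <;> fin_cases j <;>
          simp only [Fin.zero_eta, Fin.mk_one, Matrix.of_apply, Matrix.cons_val_zero,
            Matrix.cons_val_one, Matrix.head_cons, map_mul, map_inv₀]
        · exact (scal hPpos hPpos).mpr (by rwa [mul_inv_cancel₀ (ne_of_gt hPpos)])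
        · exact (scal hPpos hQpos).mpr (by rwa [hPQ])
        · exact (scal hQpos hPpos).mpr (by rwa [hQP])
        · exact (scal hQpos hQpos).mpr (by rwa [mul_inv_cancel₀ (ne_of_gt hQpos)])
      · calc x = (u * v) * x * (u * v) := by rw [huv]; simp
          _ = u * (v * x * u) * v := by simp only [Matrix.mul_assoc]
  · rintro ⟨t, rfl⟩
    have hzpow : ∀ s : ℤ, πB ^ s * πB ^ (-s) = 1 := by
      intro s; rw [← zpow_add₀ hπ0, add_neg_cancel, zpow_zero]
    have hzpowR : ∀ s : ℤ, ρ πB ^ s * ρ πB ^ (-s) = 1 := by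
      intro s; rw [← zpow_add₀ hπne, add_neg_cancel, zpow_zero]
    have hzpos : ∀ s : ℤ, (0:ℝ) < ρ πB ^ s := fun s => zpow_pos hπpos s
    have hzval : ∀ s : ℤ, ρ (πB ^ s) = ρ πB ^ s := fun s => map_zpow₀ ρ πB s
    constructor
    · refine ⟨dg 1 (πB ^ (-t)), dg 1 (πB ^ t), ?_, ?_, ?_⟩
      · rw [dg_mul_dg, one_mul]
        rw [show πB ^ (-t) * πB ^ t = 1 from by
          rw [← zpow_add₀ hπ0, neg_add_cancel, zpow_zero]]
        exact dg_one
      · rw [dg_mul_dg, one_mul, hzpow t]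
        exact dg_one
      · ext x
        simp only [Set.mem_setOf_eq, standardApartmentOrder]
        constructor
        · rintro ⟨h00, h11, h01, h10⟩
          refine ⟨dg 1 (πB ^ t) * x * dg 1 (πB ^ (-t)), ?_, ?_⟩
          · rw [dg_mul_mul]
            intro i j
            fin_cases i <;> fin_cases j <;>
              simp only [Fin.zero_eta, Fin.mk_one, Matrix.of_apply, Matrix.cons_val_zero,
                Matrix.cons_val_one, Matrix.head_cons, one_mul, mul_one,
                map_mul, hzval]
            · exact h00
            · calc ρ (x 0 1) * ρ πB ^ (-t) ≤ ρ πB ^ t * ρ πB ^ (-t) :=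
                    mul_le_mul_of_nonneg_right h01 (le_of_lt (hzpos _))
                _ = 1 := hzpowR t
            · calc ρ πB ^ t * ρ (x 1 0) ≤ ρ πB ^ t * ρ πB ^ (-t) :=
                    mul_le_mul_of_nonneg_left h10 (le_of_lt (hzpos _))
                _ = 1 := hzpowR t
            · calc ρ πB ^ t * ρ (x 1 1) * ρ πB ^ (-t)
                    = ρ (x 1 1) * (ρ πB ^ t * ρ πB ^ (-t)) := by ring
                _ = ρ (x 1 1) := by rw [hzpowR t, mul_one]
                _ ≤ 1 := h11
          · calc x = (dg 1 (πB ^ (-t)) * dg 1 (πB ^ t)) * x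
                      * (dg 1 (πB ^ (-t)) * dg 1 (πB ^ t)) := by
                  rw [dg_mul_dg, one_mul,
                    show πB ^ (-t) * πB ^ t = 1 from by
                      rw [← zpow_add₀ hπ0, neg_add_cancel, zpow_zero], dg_one]
                  simp
              _ = dg 1 (πB ^ (-t)) * (dg 1 (πB ^ t) * x * dg 1 (πB ^ (-t)))
                    * dg 1 (πB ^ t) := by simp only [Matrix.mul_assoc]
        · rintro ⟨m, hm, rfl⟩
          rw [dg_mul_mul]
          refine ⟨?_, ?_, ?_, ?_⟩ <;>
            simp only [Matrix.of_apply, Matrix.cons_val_zero,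
              Matrix.cons_val_one, Matrix.head_cons, one_mul, mul_one,
              map_mul, hzval]
          · exact hm 0 0
          · calc ρ πB ^ (-t) * ρ (m 1 1) * ρ πB ^ t
                  = ρ (m 1 1) * (ρ πB ^ t * ρ πB ^ (-t)) := by ring
              _ = ρ (m 1 1) := by rw [hzpowR t, mul_one]
              _ ≤ 1 := hm 1 1
          · calc ρ (m 0 1) * ρ πB ^ t ≤ 1 * ρ πB ^ t :=
                  mul_le_mul_of_nonneg_right (hm 0 1) (le_of_lt (hzpos _))
              _ = ρ πB ^ t := one_mul _
          · calc ρ πB ^ (-t) * ρ (m 1 0) ≤ ρ πB ^ (-t) * 1 :=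
                  mul_le_mul_of_nonneg_left (hm 1 0) (le_of_lt (hzpos _))
              _ = ρ πB ^ (-t) := mul_one _
    · intro m hm
      obtain ⟨h01, h10, h00, h11⟩ := hdiag m hm
      exact ⟨h00, h11, by rw [h01]; simpa using le_of_lt (hzpos t),
        by rw [h10]; simpa using le_of_lt (hzpos (-t))⟩

end
end
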